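/- arXiv:2402.17240 — 6 statements merged into one kernel-verified Lean document; each statement's English description precedes it below -/
import Mathlib

section
/- Let k be a positive integer and let G be a finite totally k-closed group. Then the center Z(G) is also totally k-closed. -/
/-- The `k`-closure of a subgroup `G ≤ Sym(Ω)` (Wielandt's characterization): the set of
permutations `x` such that for every `k`-tuple there is a `g ∈ G` agreeing with `x` on it. -/
def kClosure {Ω : Type*} (k : ℕ) (G : Subgroup (Equiv.Perm Ω)) : Subgroup (Equiv.Perm Ω) where
  carrier := {x | ∀ α : Fin k → Ω, ∃ g ∈ G, ∀ i, x (α i) = g (α i)}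
  one_mem' := fun α => ⟨1, G.one_mem, fun _ => rfl⟩
  mul_mem' := by
    intro x y hx hy α
    obtain ⟨g, hg, hgy⟩ := hy α
    obtain ⟨g', hg', hgx⟩ := hx (fun i => y (α i))
    refine ⟨g' * g, G.mul_mem hg' hg, fun i => ?_⟩
    simp only [Equiv.Perm.mul_apply]
    rw [hgx i, hgy i]
  inv_mem' := by
    intro x hx α
    obtain ⟨g, hg, hgx⟩ := hx (fun i => x⁻¹ (α i))
    refine ⟨g⁻¹, G.inv_mem hg, fun i => ?_⟩
    have h := hgx i
    simp only [Equiv.Perm.coe_inv, Equiv.apply_symm_apply] at h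
    exact Equiv.Perm.eq_inv_iff_eq.mpr h.symm

/-- A finite group is totally `k`-closed if the image of every faithful permutation
representation on a finite set equals its own `k`-closure. -/
def IsTotallyKClosed (k : ℕ) (G : Type*) [Group G] : Prop :=
  ∀ (Ω : Type) [Fintype Ω] (φ : G →* Equiv.Perm Ω), Function.Injective φ →
    kClosure k φ.range = φ.range

lemma mem_kClosure {Ω : Type*} {k : ℕ} {G : Subgroup (Equiv.Perm Ω)} {x : Equiv.Perm Ω} :
    x ∈ kClosure k G ↔ ∀ α : Fin k → Ω, ∃ g ∈ G, ∀ i, x (α i) = g (α i) := Iff.rfl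

/-- `Equiv.permCongr` as a `MulEquiv`. -/
def permCongrM {α β : Type*} (e : α ≃ β) : Equiv.Perm α ≃* Equiv.Perm β where
  toFun := e.permCongr
  invFun := e.symm.permCongr
  left_inv p := by ext a; simp
  right_inv p := by ext b; simp
  map_mul' p q := by ext b; simp

lemma kClosure_map {Ω Ω' : Type*} (e : Ω ≃ Ω') (k : ℕ) (H : Subgroup (Equiv.Perm Ω)) :
    kClosure k (H.map (permCongrM e).toMonoidHom)
      = (kClosure k H).map (permCongrM e).toMonoidHom := by
  ext y
  rw [mem_kClosure]
  constructor
  · intro hy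
    refine ⟨e.symm.permCongr y, fun α => ?_, ?_⟩
    · obtain ⟨g', hg', hgy⟩ := hy fun i => e (α i)
      obtain ⟨g, hg, rfl⟩ := Subgroup.mem_map.mp hg'
      refine ⟨g, hg, fun i => ?_⟩
      have h := hgy i
      simp only [MulEquiv.coe_toMonoidHom, permCongrM, MulEquiv.coe_mk, Equiv.coe_fn_mk,
        Equiv.permCongr_apply, Equiv.symm_apply_apply, Equiv.symm_symm] at h ⊢
      rw [h, Equiv.symm_apply_apply]
    · apply Equiv.ext
      intro b
      simp [permCongrM]
  · rintro ⟨x, hx, rfl⟩ α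
    obtain ⟨g, hg, hgx⟩ := hx fun i => e.symm (α i)
    refine ⟨(permCongrM e).toMonoidHom g, Subgroup.mem_map.mpr ⟨g, hg, rfl⟩, fun i => ?_⟩
    simp only [MulEquiv.coe_toMonoidHom, permCongrM, MulEquiv.coe_mk, Equiv.coe_fn_mk,
      Equiv.permCongr_apply]
    rw [hgx i]

/-- Total `k`-closedness applies to faithful actions on finite sets in any universe. -/
lemma IsTotallyKClosed.closure_eq {k : ℕ} {G : Type*} [Group G] (h : IsTotallyKClosed k G)
    {Ω' : Type*} [Finite Ω'] (ψ : G →* Equiv.Perm Ω') (hψ : Function.Injective ψ) :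
    kClosure k ψ.range = ψ.range := by
  obtain ⟨m, ⟨e⟩⟩ := Finite.exists_equiv_fin Ω'
  have hE : Function.Injective (permCongrM e).toMonoidHom := (permCongrM e).injective
  have h0 := h (Fin m) ((permCongrM e).toMonoidHom.comp ψ) (hE.comp hψ)
  rw [MonoidHom.range_comp, kClosure_map e k ψ.range] at h0
  exact Subgroup.map_injective hE h0

section Center

variable {G : Type*} [Group G] {Ω : Type} (φ : ↥(Subgroup.center G) →* Equiv.Perm Ω)

lemma center_smul_eq (z : ↥(Subgroup.center G)) (c : G ⧸ Subgroup.center G) :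
    (z : G) • c = c := by
  obtain ⟨a, rfl⟩ := QuotientGroup.mk_surjective c
  rw [MulAction.Quotient.smul_mk, smul_eq_mul, QuotientGroup.eq]
  have hzi := Subgroup.mem_center_iff.mp (Subgroup.inv_mem _ z.2) a
  have : ((z : G) * a)⁻¹ * a = (z : G)⁻¹ := by
    rw [mul_inv_rev, mul_assoc, ← hzi, ← mul_assoc, inv_mul_cancel, one_mul]
  rw [this]
  exact Subgroup.inv_mem _ z.2

/-- The cocycle recording how left translation by `g` moves transversal representatives. -/
noncomputable def coc (g : G) (c : G ⧸ Subgroup.center G) : ↥(Subgroup.center G) :=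
  ⟨(g • c).out⁻¹ * (g * c.out), by
    have h1 : (((g • c).out : G) : G ⧸ Subgroup.center G) = QuotientGroup.mk (g * c.out) := by
      rw [QuotientGroup.out_eq']
      calc g • c = g • QuotientGroup.mk c.out := by rw [QuotientGroup.out_eq']
        _ = QuotientGroup.mk (g • c.out) := MulAction.Quotient.smul_mk _ _ _
        _ = QuotientGroup.mk (g * c.out) := by rw [smul_eq_mul]
    exact QuotientGroup.eq.mp h1⟩

lemma coc_center (z : ↥(Subgroup.center G)) (c : G ⧸ Subgroup.center G) :
    coc (z : G) c = z := by
  apply Subtype.ext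
  show (((z : G) • c).out⁻¹ * ((z : G) * c.out)) = (z : G)
  rw [center_smul_eq]
  have hz := Subgroup.mem_center_iff.mp z.2 c.out
  rw [← hz]
  exact inv_mul_cancel_left _ _

/-- The underlying function of the induced permutation action of `G` on `(G ⧸ Z) × Ω`. -/
noncomputable def smulAux (g : G) (p : (G ⧸ Subgroup.center G) × Ω) :
    (G ⧸ Subgroup.center G) × Ω :=
  (g • p.1, φ (coc g p.1) p.2)

lemma smulAux_mul (g₁ g₂ : G) (p : (G ⧸ Subgroup.center G) × Ω) :
    smulAux φ g₁ (smulAux φ g₂ p) = smulAux φ (g₁ * g₂) p := by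
  obtain ⟨c, ω⟩ := p
  have h1 : g₁ • g₂ • c = (g₁ * g₂) • c := (mul_smul g₁ g₂ c).symm
  have h2 : coc g₁ (g₂ • c) * coc g₂ c = coc (g₁ * g₂) c := by
    apply Subtype.ext
    show ((g₁ • (g₂ • c)).out⁻¹ * (g₁ * (g₂ • c).out)) * ((g₂ • c).out⁻¹ * (g₂ * c.out))
      = ((g₁ * g₂) • c).out⁻¹ * ((g₁ * g₂) * c.out)
    rw [h1]
    group
  simp only [smulAux, Prod.mk.injEq]
  exact ⟨h1, by rw [← h2, map_mul]; rfl⟩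

lemma smulAux_one (p : (G ⧸ Subgroup.center G) × Ω) : smulAux φ 1 p = p := by
  obtain ⟨c, ω⟩ := p
  have h1 : (1 : G) • c = c := one_smul _ _
  have h2 : coc (1 : G) c = 1 := by
    apply Subtype.ext
    show ((1 : G) • c).out⁻¹ * (1 * c.out) = 1
    rw [h1, one_mul, inv_mul_cancel]
  simp [smulAux, h1, h2]

/-- The induced permutation of `(G ⧸ Z) × Ω` attached to `g : G`. -/
noncomputable def bigPerm (g : G) : Equiv.Perm ((G ⧸ Subgroup.center G) × Ω) where
  toFun := smulAux φ g
  invFun := smulAux φ g⁻¹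
  left_inv p := by rw [smulAux_mul, inv_mul_cancel, smulAux_one]
  right_inv p := by rw [smulAux_mul, mul_inv_cancel, smulAux_one]

/-- The induced permutation representation of `G` on `(G ⧸ Z) × Ω`. -/
noncomputable def bigHom : G →* Equiv.Perm ((G ⧸ Subgroup.center G) × Ω) :=
  MonoidHom.mk' (bigPerm φ) fun g₁ g₂ => Equiv.ext fun p => (smulAux_mul φ g₁ g₂ p).symm

lemma smul_one_quot (g : G) :
    g • (1 : G ⧸ Subgroup.center G) = (g : G ⧸ Subgroup.center G) := by
  rw [← QuotientGroup.mk_one, MulAction.Quotient.smul_mk, smul_eq_mul, mul_one]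

lemma bigHom_injective (hφ : Function.Injective φ) (ω₀ : Ω) :
    Function.Injective (bigHom φ) := by
  rw [injective_iff_map_eq_one]
  intro g hg
  have h1 : ∀ ω : Ω, smulAux φ g (1, ω) = (1, ω) := fun ω => DFunLike.congr_fun hg (1, ω)
  have hc : g • (1 : G ⧸ Subgroup.center G) = 1 := congrArg Prod.fst (h1 ω₀)
  have hgZ : g ∈ Subgroup.center G := by
    rw [smul_one_quot] at hc
    exact (QuotientGroup.eq_one_iff g).mp hc
  have hcoc : coc g (1 : G ⧸ Subgroup.center G) = ⟨g, hgZ⟩ := coc_center ⟨g, hgZ⟩ 1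
  have hω : ∀ ω : Ω, φ ⟨g, hgZ⟩ ω = ω := fun ω => by
    have h2 : φ (coc g (1 : G ⧸ Subgroup.center G)) ω = ω := congrArg Prod.snd (h1 ω)
    rwa [hcoc] at h2
  have hone : (⟨g, hgZ⟩ : ↥(Subgroup.center G)) = 1 := hφ (by rw [map_one]; exact Equiv.ext hω)
  exact congrArg Subtype.val hone

end Center

/-- The center of a finite totally `k`-closed group is totally `k`-closed. -/
theorem center_totallyKClosed (k : ℕ) (hk : 1 ≤ k) (G : Type*) [Group G] [Finite G]
    (h : IsTotallyKClosed k G) : IsTotallyKClosed k ↥(Subgroup.center G) := by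
  intro Ω _ φ hφ
  rcases isEmpty_or_nonempty Ω with hE | hNE
  · ext x
    have hx1 : x = 1 := Equiv.ext fun a => (hE.false a).elim
    subst hx1
    simp [Subgroup.one_mem]
  · obtain ⟨ω₀⟩ := hNE
    apply le_antisymm
    · intro x hx
      have hclosed := h.closure_eq (bigHom φ) (bigHom_injective φ hφ ω₀)
      have hxhat : Equiv.prodCongr (Equiv.refl (G ⧸ Subgroup.center G)) x
          ∈ kClosure k (bigHom φ).range := by
        intro α
        obtain ⟨g, hgmem, hgx⟩ := hx fun i => (α i).2
        obtain ⟨z, rfl⟩ := hgmem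
        refine ⟨bigHom φ (z : G), ⟨(z : G), rfl⟩, fun i => ?_⟩
        show ((α i).1, x (α i).2) = smulAux φ (z : G) (α i)
        unfold smulAux
        rw [center_smul_eq z (α i).1, coc_center z (α i).1]
        exact Prod.ext rfl (hgx i)
      rw [hclosed] at hxhat
      obtain ⟨g, hg⟩ := hxhat
      have h1 : ∀ ω : Ω, smulAux φ g (1, ω) = (1, x ω) := fun ω => DFunLike.congr_fun hg (1, ω)
      have hc : g • (1 : G ⧸ Subgroup.center G) = 1 := congrArg Prod.fst (h1 ω₀)
      have hgZ : g ∈ Subgroup.center G := by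
        rw [smul_one_quot] at hc
        exact (QuotientGroup.eq_one_iff g).mp hc
      have hcoc : coc g (1 : G ⧸ Subgroup.center G) = ⟨g, hgZ⟩ := coc_center ⟨g, hgZ⟩ 1
      refine ⟨⟨g, hgZ⟩, Equiv.ext fun ω => ?_⟩
      have h2 : φ (coc g (1 : G ⧸ Subgroup.center G)) ω = x ω := congrArg Prod.snd (h1 ω)
      rwa [hcoc] at h2
    · rintro x ⟨z, rfl⟩ α
      exact ⟨φ z, ⟨z, rfl⟩, fun i => rfl⟩
end

section
/- Let G be a finite nilpotent subgroup of Sym(Ω) for a finite set Ω, let k ≥ 2, let p be a prime dividing |G^{(k),Ω}|, let P be a Sylow p-subgroup of G, and let Q be a Sylow p-subgroup of G^{(k),Ω}. Then P^{(k),Ω} = Q. -/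
namespace KCl

open Equiv Subgroup

variable {Ω : Type*}

theorem mem_kClosure_iff {k : ℕ} {K : Subgroup (Perm Ω)} {x : Perm Ω} :
    x ∈ kClosure k K ↔ ∀ α : Fin k → Ω, ∃ g ∈ K, ∀ i, x (α i) = g (α i) := Iff.rfl

theorem le_kClosure (k : ℕ) (K : Subgroup (Perm Ω)) : K ≤ kClosure k K :=
  fun g hg => fun _α => ⟨g, hg, fun _ => rfl⟩

theorem kClosure_mono (k : ℕ) {K L : Subgroup (Perm Ω)} (h : K ≤ L) :
    kClosure k K ≤ kClosure k L := by
  intro x hx α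
  obtain ⟨g, hg, ha⟩ := hx α
  exact ⟨g, h hg, ha⟩

theorem kClosure_le_two {k : ℕ} (hk : 2 ≤ k) (K : Subgroup (Perm Ω)) :
    kClosure k K ≤ kClosure 2 K := by
  intro x hx α
  obtain ⟨g, hg, ha⟩ := hx (fun i => if i.1 = 0 then α 0 else α 1)
  refine ⟨g, hg, fun i => ?_⟩
  fin_cases i
  · have := ha ⟨0, by omega⟩; simpa using this
  · have := ha ⟨1, by omega⟩; simpa using this

theorem mem2 {K : Subgroup (Perm Ω)} {x : Perm Ω} (hx : x ∈ kClosure 2 K) (β γ : Ω) :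
    ∃ g ∈ K, g β = x β ∧ g γ = x γ := by
  obtain ⟨g, hg, ha⟩ := hx ![β, γ]
  refine ⟨g, hg, ?_, ?_⟩
  · have := ha 0; simpa using this.symm
  · have := ha 1; simpa using this.symm

/-- helper to build membership in `kClosure 2`. -/
theorem mem_kClosure_two {K : Subgroup (Perm Ω)} {x : Perm Ω}
    (h : ∀ β γ : Ω, ∃ g ∈ K, g β = x β ∧ g γ = x γ) : x ∈ kClosure 2 K := by
  intro α
  obtain ⟨g, hg, h0, h1⟩ := h (α 0) (α 1)
  refine ⟨g, hg, fun i => ?_⟩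
  fin_cases i
  · exact h0.symm
  · exact h1.symm

theorem kClosure_bot {k : ℕ} (hk : 1 ≤ k) {x : Perm Ω}
    (hx : x ∈ kClosure k (⊥ : Subgroup (Perm Ω))) : x = 1 := by
  ext β
  obtain ⟨g, hg, ha⟩ := hx (fun _ => β)
  rw [Subgroup.mem_bot] at hg
  subst hg
  simpa using ha ⟨0, by omega⟩

section Grp
variable {Γ : Type*} [Group Γ]


theorem pow_eq_pow_of_modEq {g : Γ} {n : ℕ} (h : g ^ n = 1) {a b : ℕ} (hab : a ≡ b [MOD n]) :
    g ^ a = g ^ b := by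
  have hd : orderOf g ∣ n := orderOf_dvd_of_pow_eq_one h
  exact pow_eq_pow_iff_modEq.mpr (hab.of_dvd hd)

theorem crt_decomp {g : Γ} {A B : ℕ} (hco : Nat.Coprime A B) (h : g ^ (A * B) = 1) :
    ∃ s t : Γ, g = s * t ∧ s ^ A = 1 ∧ t ^ B = 1 ∧ (∃ i, s = g ^ i) ∧ ∃ j, t = g ^ j := by
  obtain ⟨c₁, hc₁A, hc₁B⟩ := Nat.chineseRemainder hco 1 0
  obtain ⟨c₂, hc₂A, hc₂B⟩ := Nat.chineseRemainder hco 0 1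
  refine ⟨g ^ c₁, g ^ c₂, ?_, ?_, ?_, ⟨c₁, rfl⟩, ⟨c₂, rfl⟩⟩
  · rw [← pow_add]
    have h1 : c₁ + c₂ ≡ 1 [MOD A * B] := by
      refine (Nat.modEq_and_modEq_iff_modEq_mul hco).mp ⟨?_, ?_⟩
      · simpa using (hc₁A.add hc₂A)
      · simpa using (hc₁B.add hc₂B)
    rw [pow_eq_pow_of_modEq h h1, pow_one]
  · rw [← pow_mul]
    have hB : B ∣ c₁ := (Nat.modEq_zero_iff_dvd).mp hc₁B
    obtain ⟨e, he⟩ := hB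
    have : c₁ * A ≡ 0 [MOD A * B] := by
      refine (Nat.modEq_zero_iff_dvd).mpr ⟨e, ?_⟩
      rw [he]; ring
    rw [pow_eq_pow_of_modEq h this, pow_zero]
  · rw [← pow_mul]
    have hA : A ∣ c₂ := (Nat.modEq_zero_iff_dvd).mp hc₂A
    obtain ⟨e, he⟩ := hA
    have : c₂ * B ≡ 0 [MOD A * B] := by
      refine (Nat.modEq_zero_iff_dvd).mpr ⟨e, ?_⟩
      rw [he]; ring
    rw [pow_eq_pow_of_modEq h this, pow_zero]

theorem exists_pow_eq_right {v t : Γ} (hc : Commute v t) {A B : ℕ}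
    (hv : v ^ A = 1) (ht : t ^ B = 1) (hco : Nat.Coprime A B) : ∃ M, (v * t) ^ M = t := by
  obtain ⟨M, hMA, hMB⟩ := Nat.chineseRemainder hco 0 1
  refine ⟨M, ?_⟩
  rw [hc.mul_pow]
  rw [pow_eq_pow_of_modEq hv hMA, pow_zero, one_mul, pow_eq_pow_of_modEq ht hMB, pow_one]

theorem nontrivial_center_of_nilpotent (Γ : Type*) [Group Γ] [Group.IsNilpotent Γ]
    [Nontrivial Γ] : Nontrivial (Subgroup.center Γ) := by
  rcases (Subgroup.center Γ).bot_or_nontrivial with hbot | hnt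
  · exfalso
    have hall : ∀ n, Subgroup.upperCentralSeries Γ n = ⊥ := by
      intro n
      induction n with
      | zero => exact Subgroup.upperCentralSeries_zero Γ
      | succ n ih =>
        refine le_antisymm ?_ bot_le
        intro x hx
        rw [Subgroup.mem_upperCentralSeries_succ_iff] at hx
        have hxc : x ∈ Subgroup.center Γ := by
          rw [Subgroup.mem_center_iff]
          intro y
          have := hx y
          rw [ih, Subgroup.mem_bot] at this
          have : x * y * x⁻¹ = y := by
            have h2 : x * y * x⁻¹ * y⁻¹ * y = 1 * y := by rw [← commutatorElement_def, this]
            simpa [mul_assoc] using h2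
          calc y * x = (x * y * x⁻¹) * x := by rw [this]
          _ = x * y := by group
        rw [hbot, Subgroup.mem_bot] at hxc
        simp [hxc]
    obtain ⟨n, hn⟩ := Group.IsNilpotent.nilpotent (G := Γ)
    obtain ⟨a, b, hab⟩ := exists_pair_ne Γ
    have ha : a ∈ (⊥ : Subgroup Γ) := by rw [← hall n, hn]; trivial
    have hb : b ∈ (⊥ : Subgroup Γ) := by rw [← hall n, hn]; trivial
    rw [Subgroup.mem_bot] at ha hb
    exact hab (ha.trans hb.symm)
  · exact hnt

end Grp

/-- Permutations preserving a setoid relation. -/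
def presSetoid (s : Setoid Ω) : Subgroup (Perm Ω) where
  carrier := {σ | ∀ β γ : Ω, s.r (σ β) (σ γ) ↔ s.r β γ}
  one_mem' := by intro β γ; simp
  mul_mem' := by
    intro σ τ hσ hτ β γ
    simp only [Perm.mul_apply]
    rw [hσ (τ β) (τ γ), hτ β γ]
  inv_mem' := by
    intro σ hσ β γ
    have := hσ (σ⁻¹ β) (σ⁻¹ γ)
    simpa using this.symm

/-- The permutation induced on the quotient. -/
def quotPerm (s : Setoid Ω) : presSetoid s →* Perm (Quotient s) where
  toFun σ := Quotient.congr (σ : Perm Ω) (fun a b => (σ.2 a b).symm)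
  map_one' := by
    apply Equiv.ext
    intro q
    induction q using Quotient.inductionOn with
    | h a => rfl
  map_mul' := fun σ τ => by
    apply Equiv.ext
    intro q
    induction q using Quotient.inductionOn with
    | h a => rfl

theorem quotPerm_mk (s : Setoid Ω) (σ : presSetoid s) (a : Ω) :
    quotPerm s σ (Quotient.mk s a) = Quotient.mk s ((σ : Perm Ω) a) := rfl

theorem card_map_subgroupOf_dvd {H : Subgroup (Perm Ω)} {X : Type*} [Group X]
    (φ : ↥H →* X) (K : Subgroup (Perm Ω)) :
    Nat.card ↥(Subgroup.map φ (K.subgroupOf H)) ∣ Nat.card ↥K := by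
  set S := K.subgroupOf H
  have h1 : Nat.card ↥(Subgroup.map φ S) ∣ Nat.card ↥S :=
    Subgroup.card_dvd_of_surjective (φ.subgroupMap S) (φ.subgroupMap_surjective S)
  have hψ : Function.Injective (fun u : ↥S => (⟨u.1.1, u.2⟩ : ↥K)) := by
    intro u v huv
    have : (⟨u.1.1, u.2⟩ : ↥K).val = (⟨v.1.1, v.2⟩ : ↥K).val := congrArg Subtype.val huv
    apply Subtype.ext
    apply Subtype.ext
    exact this

  let ψ : ↥S →* ↥K :=
    { toFun := fun u => ⟨u.1.1, u.2⟩
      map_one' := rfl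
      map_mul' := fun _ _ => rfl }
  have h2 : Nat.card ↥S = Nat.card ↥ψ.range :=
    Nat.card_congr (MonoidHom.ofInjective (f := ψ) hψ).toEquiv
  have h3 : Nat.card ↥ψ.range ∣ Nat.card ↥K := Subgroup.card_subgroup_dvd_card _
  rw [h2] at h1
  exact h1.trans h3

theorem nilpotent_map_subgroupOf {H : Subgroup (Perm Ω)} {X : Type*} [Group X]
    (φ : ↥H →* X) (K : Subgroup (Perm Ω)) (hK : Group.IsNilpotent ↥K) :
    Group.IsNilpotent ↥(Subgroup.map φ (K.subgroupOf H)) := by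
  set S := K.subgroupOf H
  haveI := hK
  have hψ : Function.Injective (fun u : ↥S => (⟨u.1.1, u.2⟩ : ↥K)) := by
    intro u v huv
    have : (⟨u.1.1, u.2⟩ : ↥K).val = (⟨v.1.1, v.2⟩ : ↥K).val := congrArg Subtype.val huv
    apply Subtype.ext
    apply Subtype.ext
    exact this

  let ψ : ↥S →* ↥K :=
    { toFun := fun u => ⟨u.1.1, u.2⟩
      map_one' := rfl
      map_mul' := fun _ _ => rfl }
  have hS : Group.IsNilpotent ↥S :=
    nilpotent_of_mulEquiv (MonoidHom.ofInjective (f := ψ) hψ).symm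
  haveI := hS
  exact nilpotent_of_surjective (φ.subgroupMap S) (φ.subgroupMap_surjective S)

theorem orderOf_hom_subtype_dvd {H : Subgroup (Perm Ω)} {X : Type*} [Group X]
    (φ : ↥H →* X) {x : Perm Ω} (hx : x ∈ H) : orderOf (φ ⟨x, hx⟩) ∣ orderOf x := by
  have h1 : orderOf (H.subtype ⟨x, hx⟩) = orderOf (⟨x, hx⟩ : ↥H) :=
    orderOf_injective H.subtype H.subtype_injective _
  have h2 := orderOf_map_dvd φ (⟨x, hx⟩ : ↥H)
  rw [← h1] at h2
  exact h2

def orbSetoid (N : Subgroup (Perm Ω)) : Setoid Ω where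
  r := fun β γ => ∃ h ∈ N, h β = γ
  iseqv := by
    constructor
    · exact fun β => ⟨1, N.one_mem, rfl⟩
    · rintro β γ ⟨h, hh, rfl⟩
      exact ⟨h⁻¹, N.inv_mem hh, by simp⟩
    · rintro β γ δ ⟨h1, hh1, rfl⟩ ⟨h2, hh2, rfl⟩
      exact ⟨h2 * h1, N.mul_mem hh2 hh1, by simp⟩

def setStab (Δ : Set Ω) : Subgroup (Perm Ω) where
  carrier := {σ | ∀ β, β ∈ Δ ↔ σ β ∈ Δ}
  one_mem' := by intro β; simp
  mul_mem' := by
    intro σ τ hσ hτ β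
    rw [hτ β, hσ (τ β)]
    rfl
  inv_mem' := by
    intro σ hσ β
    have := hσ (σ⁻¹ β)
    simpa using this.symm

def resHom (Δ : Set Ω) : setStab Δ →* Perm ↥Δ where
  toFun σ := Equiv.Perm.subtypePerm σ.1 (fun b => (σ.2 b).symm)
  map_one' := Equiv.ext fun b => Subtype.ext rfl
  map_mul' := fun σ τ => Equiv.ext fun b => Subtype.ext rfl

theorem resHom_apply (Δ : Set Ω) (σ : setStab Δ) (b : ↥Δ) :
    ((resHom Δ σ b : ↥Δ) : Ω) = (σ : Perm Ω) b := rfl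

theorem mem_setStab_of_mapsTo [Finite Ω] {Δ : Set Ω} {σ : Perm Ω}
    (h : Set.MapsTo σ Δ Δ) : σ ∈ setStab Δ := by
  have himg : σ '' Δ = Δ :=
    Set.eq_of_subset_of_ncard_le (h.image_subset)
      (by rw [Set.ncard_image_of_injective Δ σ.injective]) (Set.toFinite Δ)
  intro β
  constructor
  · exact fun hβ => h hβ
  · intro hβ
    rw [← himg] at hβ
    obtain ⟨γ, hγ, he⟩ := hβ
    rwa [← σ.injective he]
theorem pres_forward {K N : Subgroup (Perm Ω)} (hNK : ∀ g ∈ K, ∀ h ∈ N, g * h * g⁻¹ ∈ N)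
    {y : Perm Ω} (hy : y ∈ kClosure 2 K) {β γ : Ω} (h : (orbSetoid N).r β γ) :
    (orbSetoid N).r (y β) (y γ) := by
  obtain ⟨h0, hh0, he⟩ := h
  obtain ⟨g, hg, hgβ, hgγ⟩ := mem2 hy β γ
  refine ⟨g * h0 * g⁻¹, hNK g hg h0 hh0, ?_⟩
  have h1 : g⁻¹ (y β) = β := by rw [← hgβ]; simp
  show g (h0 (g⁻¹ (y β))) = y γ
  rw [h1, he, hgγ]

theorem mem_presSetoid_of_kClosure {K N : Subgroup (Perm Ω)}
    (hNK : ∀ g ∈ K, ∀ h ∈ N, g * h * g⁻¹ ∈ N) {x : Perm Ω} (hx : x ∈ kClosure 2 K) :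
    x ∈ presSetoid (orbSetoid N) := by
  intro β γ
  constructor
  · intro h
    have h2 := pres_forward hNK ((kClosure 2 K).inv_mem hx) h
    simpa using h2
  · exact pres_forward hNK hx

theorem quotPerm_mem_kClosure {K N : Subgroup (Perm Ω)}
    (hNK : ∀ g ∈ K, ∀ h ∈ N, g * h * g⁻¹ ∈ N) {x : Perm Ω} (hx : x ∈ kClosure 2 K)
    (hxp : x ∈ presSetoid (orbSetoid N)) :
    quotPerm (orbSetoid N) ⟨x, hxp⟩ ∈
      kClosure 2 (Subgroup.map (quotPerm (orbSetoid N))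
        (K.subgroupOf (presSetoid (orbSetoid N)))) := by
  apply mem_kClosure_two
  intro b c
  obtain ⟨g, hg, hgβ, hgγ⟩ := mem2 hx b.out c.out
  have hgp : g ∈ presSetoid (orbSetoid N) := mem_presSetoid_of_kClosure hNK (le_kClosure 2 K hg)
  refine ⟨quotPerm (orbSetoid N) ⟨g, hgp⟩,
    Subgroup.mem_map.mpr ⟨⟨g, hgp⟩, Subgroup.mem_subgroupOf.mpr hg, rfl⟩, ?_, ?_⟩
  · conv_lhs => rw [← Quotient.out_eq b]
    conv_rhs => rw [← Quotient.out_eq b]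
    rw [quotPerm_mk, quotPerm_mk]
    exact congrArg _ hgβ
  · conv_lhs => rw [← Quotient.out_eq c]
    conv_rhs => rw [← Quotient.out_eq c]
    rw [quotPerm_mk, quotPerm_mk]
    exact congrArg _ hgγ

theorem res_mem_kClosure [Finite Ω] {K : Subgroup (Perm Ω)} {Δ : Set Ω} {x : Perm Ω}
    (hx : x ∈ kClosure 2 K) (hmx : Set.MapsTo x Δ Δ)
    (hsel : ∀ β ∈ Δ, ∀ g ∈ K, g β = x β → Set.MapsTo g Δ Δ) :
    ∃ hxs : x ∈ setStab Δ, resHom Δ ⟨x, hxs⟩ ∈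
      kClosure 2 (Subgroup.map (resHom Δ) (K.subgroupOf (setStab Δ))) := by
  refine ⟨mem_setStab_of_mapsTo hmx, ?_⟩
  apply mem_kClosure_two
  intro b c
  obtain ⟨g, hg, hgβ, hgγ⟩ := mem2 hx b.1 c.1
  have hgs : g ∈ setStab Δ := mem_setStab_of_mapsTo (hsel b.1 b.2 g hg hgβ)
  exact ⟨resHom Δ ⟨g, hgs⟩,
    Subgroup.mem_map.mpr ⟨⟨g, hgs⟩, Subgroup.mem_subgroupOf.mpr hg, rfl⟩,
    Subtype.ext hgβ, Subtype.ext hgγ⟩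

universe u

theorem eq_one_of_coprime_card (n : ℕ) : ∀ {Ω : Type u} [Finite Ω],
    Nat.card Ω = n → ∀ (K : Subgroup (Perm Ω)), Group.IsNilpotent ↥K →
    ∀ (x : Perm Ω), x ∈ kClosure 2 K → Nat.Coprime (orderOf x) (Nat.card ↥K) → x = 1 := by
  induction n using Nat.strong_induction_on with
  | _ n IH =>
  intro Ω _ hn K hnil x hx hco
  rcases K.bot_or_nontrivial with hbot | hnt
  · subst hbot
    exact kClosure_bot (by norm_num) hx
  haveI := hnil
  haveI := hnt
  haveI := nontrivial_center_of_nilpotent ↥K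
  set C := Subgroup.center ↥K with hC
  have hc1 : 1 < Nat.card ↥C := Finite.one_lt_card
  set r := (Nat.card ↥C).minFac with hrdef
  have hr : r.Prime := Nat.minFac_prime (by omega)
  haveI := Fact.mk hr
  obtain ⟨zc, hzc⟩ : ∃ zc : ↥C, orderOf zc = r := by
    haveI : Fintype ↥C := Fintype.ofFinite _
    exact exists_prime_orderOf_dvd_card r
      (by rw [← Nat.card_eq_fintype_card]; exact Nat.minFac_dvd _)
  set zK : ↥K := (zc : ↥K) with hzKdef
  set z : Perm Ω := (zK : Perm Ω) with hzdef
  have hzmemK : z ∈ K := zK.2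
  have hozK : orderOf zK = r := by
    rw [← hzc]
    exact orderOf_injective C.subtype C.subtype_injective zc
  have hoz : orderOf z = r := by
    rw [← hozK]
    exact orderOf_injective K.subtype K.subtype_injective zK
  have hz1 : z ≠ 1 := by
    intro h
    rw [h, orderOf_one] at hoz
    exact hr.one_lt.ne' hoz.symm
  have hzcomm : ∀ g ∈ K, Commute z g := by
    intro g hg
    have h1 := (Subgroup.mem_center_iff.mp zc.2) ⟨g, hg⟩
    have h2 := congrArg (Subtype.val) h1
    exact (h2).symm
  have hrK : r ∣ Nat.card ↥K := by
    rw [← hozK]; exact orderOf_dvd_natCard zK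
  set N := Subgroup.zpowers z with hNdef
  have hNcomm : ∀ v ∈ N, ∀ g ∈ K, Commute v g := by
    intro v hv g hg
    obtain ⟨k, rfl⟩ := Subgroup.mem_zpowers_iff.mp hv
    exact (hzcomm g hg).zpow_left k
  have hNN : ∀ v ∈ N, ∀ w ∈ N, Commute v w := by
    intro v hv w hw
    obtain ⟨k, rfl⟩ := Subgroup.mem_zpowers_iff.mp hv
    obtain ⟨l, rfl⟩ := Subgroup.mem_zpowers_iff.mp hw
    exact (Commute.refl z).zpow_zpow k l
  by_cases htr : ∃ β₀ : Ω, ∀ γ : Ω, (orbSetoid N).r β₀ γ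
  · -- ⟨z⟩ is transitive: K is contained in ⟨z⟩ and semiregular
    obtain ⟨β₀, hβ₀⟩ := htr
    have huniq : ∀ u ∈ N, ∀ v ∈ N, u β₀ = v β₀ → u = v := by
      intro u hu v hv he
      ext δ
      obtain ⟨w, hw, hwe⟩ := hβ₀ δ
      have h1 : u (w β₀) = w (u β₀) := by
        have := hNN w hw u hu
        calc u (w β₀) = (u * w) β₀ := rfl
        _ = (w * u) β₀ := by rw [this.eq]
        _ = w (u β₀) := rfl
      have h2 : v (w β₀) = w (v β₀) := by
        have := hNN w hw v hv
        calc v (w β₀) = (v * w) β₀ := rfl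
        _ = (w * v) β₀ := by rw [this.eq]
        _ = w (v β₀) := rfl
      rw [← hwe, h1, h2, he]
    have hKN : K ≤ N := by
      intro g hg
      obtain ⟨w, hw, hwe⟩ := hβ₀ (g β₀)
      have : g = w := by
        ext δ
        obtain ⟨v, hv, hve⟩ := hβ₀ δ
        have h1 : g (v β₀) = v (g β₀) := by
          have := hNcomm v hv g hg
          calc g (v β₀) = (g * v) β₀ := rfl
          _ = (v * g) β₀ := by rw [← this.eq]
          _ = v (g β₀) := rfl
        have h2 : w (v β₀) = v (w β₀) := by
          have := hNN v hv w hw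
          calc w (v β₀) = (w * v) β₀ := rfl
          _ = (v * w) β₀ := by rw [← this.eq]
          _ = v (w β₀) := rfl
        rw [← hve, h1, h2, hwe]
      rw [this]; exact hw
    have hxN : x ∈ kClosure 2 N := kClosure_mono 2 hKN hx
    obtain ⟨g0, hg0, hg0e, _⟩ := mem2 hxN β₀ β₀
    have hxg0 : x = g0 := by
      ext γ
      obtain ⟨gγ, hgγ, h1, h2⟩ := mem2 hxN β₀ γ
      have : gγ = g0 := huniq gγ hgγ g0 hg0 (h1.trans hg0e.symm)
      rw [← h2, this]
    have hxmem : x ∈ N := hxg0 ▸ hg0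
    have hxr : x ^ r = 1 := by
      obtain ⟨k, hk⟩ := Subgroup.mem_zpowers_iff.mp hxmem
      have hz_r : z ^ (r : ℕ) = 1 := by rw [← hoz]; exact pow_orderOf_eq_one z
      rw [← hk, ← zpow_natCast (z ^ k) r, ← zpow_mul, mul_comm, zpow_mul, zpow_natCast, hz_r,
        one_zpow]
    have hdvd1 : orderOf x ∣ r := orderOf_dvd_of_pow_eq_one hxr
    have hdvd2 : orderOf x ∣ Nat.card ↥K := hdvd1.trans hrK
    have : orderOf x = 1 := Nat.eq_one_of_dvd_coprimes hco dvd_rfl hdvd2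
    exact orderOf_eq_one_iff.mp this
  · -- ⟨z⟩ is not transitive: quotient by its orbits, then restrict to orbits
    push_neg at htr
    have hNK : ∀ g ∈ K, ∀ h ∈ N, g * h * g⁻¹ ∈ N := by
      intro g hg h hh
      have hc := hNcomm h hh g hg
      have : g * h * g⁻¹ = h := by
        rw [← hc.eq, mul_assoc, mul_inv_cancel, mul_one]
      rw [this]; exact hh
    set s := orbSetoid N with hsdef
    have hxp := mem_presSetoid_of_kClosure hNK hx
    have hq := quotPerm_mem_kClosure hNK hx hxp
    haveI : Finite (Quotient s) := Quotient.finite _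
    have hsur : Function.Surjective (Quotient.mk s) := fun b => ⟨b.out, Quotient.out_eq b⟩
    have hle : Nat.card (Quotient s) ≤ Nat.card Ω := Nat.card_le_card_of_surjective _ hsur
    have hlt : Nat.card (Quotient s) < n := by
      rw [← hn]
      rcases lt_or_eq_of_le hle with h | h
      · exact h
      · exfalso
        have hbij : Function.Bijective (Quotient.mk s) :=
          (Nat.bijective_iff_surjective_and_card _).mpr ⟨hsur, h.symm⟩
        apply hz1
        ext β
        have hrel : s.r β (z β) := ⟨z, Subgroup.mem_zpowers z, rfl⟩
        have := hbij.1 (Quotient.sound hrel)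
        exact this.symm
    have hxb : quotPerm s ⟨x, hxp⟩ = 1 := by
      refine IH (Nat.card (Quotient s)) hlt rfl _ (nilpotent_map_subgroupOf (quotPerm s) K hnil)
        _ hq ?_
      have hod := orderOf_hom_subtype_dvd (quotPerm s) hxp
      exact Nat.Coprime.coprime_dvd_left hod
        (Nat.Coprime.coprime_dvd_right (card_map_subgroupOf_dvd (quotPerm s) K) hco)
    have horb : ∀ β : Ω, s.r β (x β) := by
      intro β
      have h1 : quotPerm s ⟨x, hxp⟩ (Quotient.mk s β) = Quotient.mk s β := by rw [hxb]; rfl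
      rw [quotPerm_mk] at h1
      exact Setoid.symm (Quotient.exact h1)
    ext β
    show x β = β
    set Δ : Set Ω := {γ | s.r β γ} with hΔdef
    have hββ : β ∈ Δ := Setoid.refl β
    have hmx : Set.MapsTo x Δ Δ := fun γ hγ => Setoid.trans hγ (horb γ)
    have hsel : ∀ β' ∈ Δ, ∀ g ∈ K, g β' = x β' → Set.MapsTo g Δ Δ := by
      intro β' hβ' g hg hge δ hδ
      obtain ⟨w, hw, hwe⟩ := s.iseqv.trans (s.iseqv.symm (show s.r β β' from hβ')) (show s.r β δ from hδ)
      have hc := hNcomm w hw g hg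
      have h1 : g δ = w (x β') := by
        rw [← hwe, ← hge]
        calc g (w β') = (g * w) β' := rfl
        _ = (w * g) β' := by rw [← hc.eq]
        _ = w (g β') := rfl
      have h2 : s.r β (x β') := Setoid.trans hβ' (horb β')
      have h3 : s.r (x β') (w (x β')) := ⟨w, hw, rfl⟩
      show g δ ∈ Δ
      rw [h1]
      exact Setoid.trans h2 h3
    obtain ⟨hxs, hres⟩ := res_mem_kClosure hx hmx hsel
    obtain ⟨γ, hγ⟩ := htr β
    have hΔlt : Nat.card ↥Δ < n := by
      rw [← hn, ← Set.ncard_univ Ω, Nat.card_coe_set_eq]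
      refine Set.ncard_lt_ncard ⟨Set.subset_univ Δ, fun hsub => hγ (hsub (Set.mem_univ γ))⟩
        (Set.finite_univ)
    have h1 : resHom Δ ⟨x, hxs⟩ = 1 := by
      refine IH (Nat.card ↥Δ) hΔlt rfl _ (nilpotent_map_subgroupOf (resHom Δ) K hnil) _ hres ?_
      have hod := orderOf_hom_subtype_dvd (resHom Δ) hxs
      exact Nat.Coprime.coprime_dvd_left hod
        (Nat.Coprime.coprime_dvd_right (card_map_subgroupOf_dvd (resHom Δ) K) hco)
    have h2 := congrArg (fun π : Perm ↥Δ => ((π ⟨β, hββ⟩ : ↥Δ) : Ω)) h1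
    simpa [resHom_apply] using h2

section NilpotentGroup

variable {Γ : Type*} [Group Γ] [Finite Γ]

theorem mem_sylow_of_pow_eq_one (hnil : Group.IsNilpotent Γ)
    {q : ℕ} (hq : q.Prime) {A : ℕ} {σ : Γ} (h : σ ^ q ^ A = 1) (R : Sylow q Γ) :
    σ ∈ (R : Subgroup Γ) := by
  haveI := Fact.mk hq
  haveI := hnil
  have htfae := ((isNilpotent_of_finite_tfae (G := Γ)).out 0 3).mp hnil
  have hnorm : (R : Subgroup Γ).Normal := htfae q (Fact.mk hq) R
  haveI := Sylow.unique_of_normal R hnorm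
  have hPG : IsPGroup q (Subgroup.zpowers σ) := by
    intro u
    obtain ⟨k, hk⟩ := Subgroup.mem_zpowers_iff.mp u.2
    refine ⟨A, Subtype.ext ?_⟩
    have h1 : ((u : Γ)) ^ q ^ A = 1 := by
      rw [← hk, ← zpow_natCast (σ ^ k) (q ^ A), ← zpow_mul, mul_comm, zpow_mul, zpow_natCast, h,
        one_zpow]
    simpa using h1
  obtain ⟨R₂, hle⟩ := hPG.exists_le_sylow
  have hR2 : R₂ = R := Subsingleton.elim _ _
  exact hR2 ▸ hle (Subgroup.mem_zpowers σ)

theorem commute_of_not_dvd_orderOf (hnil : Group.IsNilpotent Γ) {p : ℕ} (hp : p.Prime)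
    (P : Sylow p Γ) :
    ∀ t : Γ, ¬ p ∣ orderOf t → ∀ w ∈ (P : Subgroup Γ), Commute t w := by
  haveI := Fact.mk hp
  suffices H : ∀ m, ∀ t : Γ, orderOf t = m → ¬ p ∣ m → ∀ w ∈ (P : Subgroup Γ), Commute t w by
    intro t ht w hw
    exact H _ t rfl ht w hw
  intro m
  induction m using Nat.strong_induction_on with
  | _ m IH =>
  intro t htord hpm w hw
  rcases eq_or_ne m 1 with h1 | h1
  · have ht1 : t = 1 := orderOf_eq_one_iff.mp (htord.trans h1)
    rw [ht1]
    exact Commute.one_left w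
  · set r := m.minFac with hrdef
    have hrp : r.Prime := Nat.minFac_prime h1
    haveI := Fact.mk hrp
    have hrm : r ∣ m := Nat.minFac_dvd m
    have hrne : r ≠ p := fun h => hpm (h ▸ hrm)
    have hm0 : m ≠ 0 := by
      rw [← htord]
      exact (orderOf_pos t).ne'
    set A := r ^ m.factorization r with hAdef
    set Bc := m / A with hBdef
    have hAB : A * Bc = m := Nat.ordProj_mul_ordCompl_eq_self m r
    have hcoAB : Nat.Coprime A Bc := Nat.Coprime.pow_left _ (Nat.coprime_ordCompl hrp hm0)
    have htm : t ^ (A * Bc) = 1 := by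
      rw [hAB, ← htord]
      exact pow_orderOf_eq_one t
    obtain ⟨a, b, hab, haA, hbB, ⟨i, hi⟩, ⟨j, hj⟩⟩ := crt_decomp hcoAB htm
    obtain ⟨R⟩ : Nonempty (Sylow r Γ) := Sylow.nonempty
    have haR : a ∈ (R : Subgroup Γ) := mem_sylow_of_pow_eq_one hnil hrp haA R
    have htfae := ((isNilpotent_of_finite_tfae (G := Γ)).out 0 3).mp hnil
    have hnR : (R : Subgroup Γ).Normal := htfae r (Fact.mk hrp) R
    have hnP : (P : Subgroup Γ).Normal := htfae p (Fact.mk hp) P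
    have hdis : Disjoint (R : Subgroup Γ) (P : Subgroup Γ) := by
      rw [Subgroup.disjoint_def]
      intro u huR huP
      obtain ⟨k1, hk1⟩ := R.isPGroup' ⟨u, huR⟩
      obtain ⟨k2, hk2⟩ := P.isPGroup' ⟨u, huP⟩
      have d1 : orderOf u ∣ r ^ k1 :=
        orderOf_dvd_of_pow_eq_one (by simpa using congrArg (Subtype.val) hk1)
      have d2 : orderOf u ∣ p ^ k2 :=
        orderOf_dvd_of_pow_eq_one (by simpa using congrArg (Subtype.val) hk2)
      have hcop : Nat.Coprime (r ^ k1) (p ^ k2) :=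
        Nat.Coprime.pow _ _ ((Nat.coprime_primes hrp hp).mpr hrne)
      exact orderOf_eq_one_iff.mp (Nat.eq_one_of_dvd_coprimes hcop d1 d2)
    have hcaw : Commute a w :=
      Subgroup.commute_of_normal_of_disjoint _ _ hnR hnP hdis a w haR hw
    have hcbw : Commute b w := by
      have hbdvd : orderOf b ∣ Bc := orderOf_dvd_of_pow_eq_one hbB
      have hBpos : 0 < Bc := by
        rcases Nat.eq_zero_or_pos Bc with h | h
        · rw [h, mul_zero] at hAB
          exact absurd hAB.symm hm0
        · exact h
      have hA1 : 1 < A := by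
        have hfac : 0 < m.factorization r := (Nat.Prime.factorization_pos_of_dvd hrp hm0 hrm)
        exact Nat.one_lt_pow hfac.ne' hrp.one_lt
      have hBlt : Bc < m := by
        rw [← hAB]
        calc Bc = 1 * Bc := (one_mul Bc).symm
        _ < A * Bc := by exact (Nat.mul_lt_mul_right hBpos).mpr hA1
      have hlt : orderOf b < m := lt_of_le_of_lt (Nat.le_of_dvd hBpos hbdvd) hBlt
      refine IH (orderOf b) hlt b rfl ?_ w hw
      intro hd
      exact hpm ((hd.trans hbdvd).trans ⟨A, by rw [← hAB, mul_comm]⟩)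
    rw [hab]
    exact hcaw.mul_left hcbw

end NilpotentGroup

variable {Ω : Type u} [Finite Ω]

theorem claimC (G : Subgroup (Perm Ω)) (hnil : Group.IsNilpotent ↥G)
    {p : ℕ} (hp : p.Prime) (P : Sylow p ↥G) {x : Perm Ω} (hx : x ∈ kClosure 2 G)
    {a : ℕ} (hxp : x ^ p ^ a = 1) (β : Ω) :
    ∃ h ∈ Subgroup.map G.subtype (P : Subgroup ↥G), h β = x β := by
  haveI := Fact.mk hp
  set Pm := Subgroup.map G.subtype (P : Subgroup ↥G) with hPmdef
  have htfae := ((isNilpotent_of_finite_tfae (G := ↥G)).out 0 3).mp hnil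
  have hnorm : (P : Subgroup ↥G).Normal := htfae p (Fact.mk hp) P
  have hNK : ∀ g ∈ G, ∀ h ∈ Pm, g * h * g⁻¹ ∈ Pm := by
    intro g hg h hh
    obtain ⟨hh', hhP, rfl⟩ := hh
    exact ⟨⟨g, hg⟩ * hh' * ⟨g, hg⟩⁻¹, hnorm.conj_mem hh' hhP ⟨g, hg⟩, rfl⟩
  set s := orbSetoid Pm with hsdef
  have hxpres := mem_presSetoid_of_kClosure hNK hx
  have hq := quotPerm_mem_kClosure hNK hx hxpres
  set Kb := Subgroup.map (quotPerm s) (G.subgroupOf (presSetoid s)) with hKbdef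
  haveI : Finite (Quotient s) := Quotient.finite _
  have hPmtriv : ∀ (sigma0 : ↥(presSetoid s)), (sigma0 : Perm Ω) ∈ Pm → quotPerm s sigma0 = 1 := by
    intro sigma0 hσ
    apply Equiv.ext
    intro q
    induction q using Quotient.inductionOn with
    | h δ =>
    show quotPerm s sigma0 (Quotient.mk s δ) = Quotient.mk s δ
    rw [quotPerm_mk]
    have hrel : s.r δ ((sigma0 : Perm Ω) δ) := ⟨(sigma0 : Perm Ω), hσ, rfl⟩
    exact (Quotient.sound hrel).symm
  have hpKb : ¬ p ∣ Nat.card ↥Kb := by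
    intro hdvd
    haveI : Fintype ↥Kb := Fintype.ofFinite _
    obtain ⟨yb, hyb⟩ := exists_prime_orderOf_dvd_card (G := ↥Kb) p
      (by rwa [← Nat.card_eq_fintype_card])
    obtain ⟨g0, hg0mem, hg0eq⟩ := Subgroup.mem_map.mp yb.2
    set e := orderOf g0 with hedef
    have hybord : orderOf ((yb : Perm (Quotient s))) = p := by
      rw [← hyb]
      exact orderOf_injective Kb.subtype Kb.subtype_injective yb
    have hpe : p ∣ e := by
      have h2 : orderOf (quotPerm s g0) ∣ e := orderOf_map_dvd _ _
      rwa [hg0eq, hybord] at h2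
    have he0 : e ≠ 0 := (orderOf_pos g0).ne'
    set A := p ^ e.factorization p with hAdef
    set Bc := e / A with hBdef
    have hAB : A * Bc = e := Nat.ordProj_mul_ordCompl_eq_self e p
    have hcoAB : Nat.Coprime A Bc := Nat.Coprime.pow_left _ (Nat.coprime_ordCompl hp he0)
    have hgm : g0 ^ (A * Bc) = 1 := by
      rw [hAB]
      exact pow_orderOf_eq_one g0
    obtain ⟨s0, t0, hab, hsA, htB, ⟨i, hi⟩, ⟨j, hj⟩⟩ := crt_decomp hcoAB hgm
    -- the underlying permutation of s0 is a p-element of G, hence lies in Pm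
    have hs0G : (s0 : Perm Ω) ∈ G := by
      rw [hi]
      have : ((g0 : ↥(presSetoid s)) : Perm Ω) ∈ G := hg0mem
      push_cast
      exact G.pow_mem this i
    have hs0A : ((⟨(s0 : Perm Ω), hs0G⟩ : ↥G)) ^ A = 1 := by
      apply Subtype.ext
      have := congrArg (fun u : ↥(presSetoid s) => (u : Perm Ω)) hsA
      push_cast at this ⊢
      exact this
    have hs0Pm : (s0 : Perm Ω) ∈ Pm :=
      ⟨⟨(s0 : Perm Ω), hs0G⟩, mem_sylow_of_pow_eq_one hnil hp hs0A P, rfl⟩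
    have hs01 : quotPerm s s0 = 1 := hPmtriv s0 hs0Pm
    have ht1 : quotPerm s g0 = quotPerm s t0 := by
      rw [hab, map_mul, hs01, one_mul]
    have hcontra : p ∣ Bc := by
      have h3 : orderOf (quotPerm s t0) ∣ Bc :=
        orderOf_dvd_of_pow_eq_one (by rw [← map_pow, htB, map_one])
      rw [← ht1, hg0eq, hybord] at h3
      exact h3
    exact Nat.not_dvd_ordCompl hp he0 hcontra
  have hxb : quotPerm s ⟨x, hxpres⟩ = 1 := by
    refine eq_one_of_coprime_card (Nat.card (Quotient s)) rfl Kb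
      (nilpotent_map_subgroupOf _ G hnil) _ hq ?_
    have h1 : orderOf (quotPerm s ⟨x, hxpres⟩) ∣ p ^ a :=
      (orderOf_hom_subtype_dvd _ _).trans (orderOf_dvd_of_pow_eq_one hxp)
    obtain ⟨j, hj, hje⟩ := (Nat.dvd_prime_pow hp).mp h1
    rw [hje]
    exact Nat.Coprime.pow_left j ((Nat.Prime.coprime_iff_not_dvd hp).mpr hpKb)
  have h1 : quotPerm s ⟨x, hxpres⟩ (Quotient.mk s β) = Quotient.mk s β := by rw [hxb]; rfl
  rw [quotPerm_mk] at h1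
  exact Setoid.symm (Quotient.exact h1)

theorem perm_pow_fix {σ : Perm Ω} {β : Ω} (h : σ β = β) (M : ℕ) : (σ ^ M) β = β := by
  induction M with
  | zero => rfl
  | succ M ih =>
    rw [pow_succ]
    show (σ ^ M) (σ β) = β
    rw [h, ih]

theorem mem_kClosure_sylow (G : Subgroup (Perm Ω)) (hnil : Group.IsNilpotent ↥G)
    {p : ℕ} (hp : p.Prime) (P : Sylow p ↥G) {k : ℕ} (hk : 2 ≤ k) {x : Perm Ω}
    (hx : x ∈ kClosure k G) {a : ℕ} (hxp : x ^ p ^ a = 1) :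
    x ∈ kClosure k (Subgroup.map G.subtype (P : Subgroup ↥G)) := by
  haveI := Fact.mk hp
  have hx2 : x ∈ kClosure 2 G := kClosure_le_two hk G hx
  intro α
  obtain ⟨g, hg, hag⟩ := hx α
  set gG : ↥G := ⟨g, hg⟩ with hgGdef
  set e := orderOf gG with hedef
  have he0 : e ≠ 0 := (orderOf_pos gG).ne'
  set A := p ^ e.factorization p with hAdef
  set Bc := e / A with hBdef
  have hAB : A * Bc = e := Nat.ordProj_mul_ordCompl_eq_self e p
  have hcoAB : Nat.Coprime A Bc := Nat.Coprime.pow_left _ (Nat.coprime_ordCompl hp he0)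
  have hgm : gG ^ (A * Bc) = 1 := by
    rw [hAB]
    exact pow_orderOf_eq_one gG
  obtain ⟨s0, t0, hab, hsA, htB, ⟨i0, hi0⟩, ⟨j0, hj0⟩⟩ := crt_decomp hcoAB hgm
  have hs0P : s0 ∈ (P : Subgroup ↥G) := mem_sylow_of_pow_eq_one hnil hp hsA P
  refine ⟨(s0 : Perm Ω), ⟨s0, hs0P, rfl⟩, ?_⟩
  intro i
  obtain ⟨h, hhPm, hhe⟩ := claimC G hnil hp P hx2 hxp (α i)
  obtain ⟨hG, hhP, rfl⟩ := hhPm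
  have h1 : g (α i) = (hG : Perm Ω) (α i) := (hag i).symm.trans hhe.symm
  have hufix : ((hG⁻¹ * gG : ↥G) : Perm Ω) (α i) = α i := by
    push_cast
    show (hG : Perm Ω)⁻¹ (g (α i)) = α i
    rw [h1]
    exact Equiv.symm_apply_apply _ _
  have hpBc : ¬ p ∣ Bc := Nat.not_dvd_ordCompl hp he0
  have hpt0 : ¬ p ∣ orderOf t0 := by
    intro hd
    exact hpBc (hd.trans (orderOf_dvd_of_pow_eq_one htB))
  have hmemv : hG⁻¹ * s0 ∈ (P : Subgroup ↥G) := mul_mem (inv_mem hhP) hs0P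
  have hcomm : Commute t0 (hG⁻¹ * s0) :=
    commute_of_not_dvd_orderOf hnil hp P t0 hpt0 _ hmemv
  have hu : hG⁻¹ * gG = (hG⁻¹ * s0) * t0 := by rw [hab, mul_assoc]
  obtain ⟨V, hV⟩ := P.isPGroup' ⟨hG⁻¹ * s0, hmemv⟩
  have hVv : (hG⁻¹ * s0) ^ p ^ V = 1 := by simpa using congrArg (Subtype.val) hV
  have hcoVB : Nat.Coprime (p ^ V) Bc :=
    Nat.Coprime.pow_left _ (Nat.coprime_ordCompl hp he0)
  obtain ⟨M, hM⟩ := exists_pow_eq_right hcomm.symm hVv htB hcoVB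
  have ht0fix : ((t0 : ↥G) : Perm Ω) (α i) = α i := by
    rw [← hM, ← hu]
    have : (((hG⁻¹ * gG) ^ M : ↥G) : Perm Ω) = (((hG⁻¹ * gG : ↥G) : Perm Ω)) ^ M := by
      push_cast
      rfl
    rw [this]
    exact perm_pow_fix hufix M
  have hgst : g = (s0 : Perm Ω) * (t0 : Perm Ω) := by
    have := congrArg (Subtype.val) hab
    push_cast at this
    exact this
  rw [hag i, hgst]
  show (s0 : Perm Ω) ((t0 : Perm Ω) (α i)) = (s0 : Perm Ω) (α i)
  rw [ht0fix]

theorem isPGroup_kClosure {k : ℕ} (hk : 2 ≤ k) {p : ℕ} (hp : p.Prime)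
    (Pm : Subgroup (Perm Ω)) (hPm : IsPGroup p ↥Pm) : IsPGroup p ↥(kClosure k Pm) := by
  haveI := Fact.mk hp
  intro xs
  have hx2 : (xs : Perm Ω) ∈ kClosure 2 Pm := kClosure_le_two hk Pm xs.2
  set x := (xs : Perm Ω) with hxdef
  set e := orderOf x with hedef
  have he0 : e ≠ 0 := (orderOf_pos x).ne'
  set A := p ^ e.factorization p with hAdef
  set Bc := e / A with hBdef
  have hAB : A * Bc = e := Nat.ordProj_mul_ordCompl_eq_self e p
  have hcoAB : Nat.Coprime A Bc := Nat.Coprime.pow_left _ (Nat.coprime_ordCompl hp he0)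
  have hgm : x ^ (A * Bc) = 1 := by
    rw [hAB]
    exact pow_orderOf_eq_one x
  obtain ⟨s0, t0, hab, hsA, htB, ⟨i0, hi0⟩, ⟨j0, hj0⟩⟩ := crt_decomp hcoAB hgm
  have ht0mem : t0 ∈ kClosure 2 Pm := by
    rw [hj0]
    exact pow_mem hx2 j0
  have hnilPm : Group.IsNilpotent ↥Pm := hPm.isNilpotent
  obtain ⟨n, hn⟩ := IsPGroup.iff_card.mp hPm
  have ht0co : Nat.Coprime (orderOf t0) (Nat.card ↥Pm) := by
    rw [hn]
    exact Nat.Coprime.pow_right n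
      (Nat.Coprime.coprime_dvd_left (orderOf_dvd_of_pow_eq_one htB)
        (Nat.coprime_ordCompl hp he0).symm)
  have ht0 : t0 = 1 := eq_one_of_coprime_card (Nat.card Ω) rfl Pm hnilPm t0 ht0mem ht0co
  refine ⟨e.factorization p, Subtype.ext ?_⟩
  have hxs : x = s0 := by rw [hab, ht0, mul_one]
  have : x ^ A = 1 := by rw [hxs]; exact hsA
  simpa using this

end KCl


/-- If `G` is a finite nilpotent permutation group, `k ≥ 2`, `p` a prime dividing the
order of the `k`-closure, `P` a Sylow `p`-subgroup of `G` and `Q` a Sylow `p`-subgroup of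
the `k`-closure, then the `k`-closure of `P` equals `Q`. -/
theorem kClosure_sylow_eq (Ω : Type*) [Finite Ω] (G : Subgroup (Equiv.Perm Ω))
    (hnil : Group.IsNilpotent ↥G) (k : ℕ) (hk : 2 ≤ k) (p : ℕ) (hp : p.Prime)
    (hdvd : p ∣ Nat.card ↥(kClosure k G)) (P : Sylow p ↥G) (Q : Sylow p ↥(kClosure k G)) :
    kClosure k (Subgroup.map G.subtype ↑P) =
      Subgroup.map (kClosure k G).subtype ↑Q := by
  classical
  haveI := Fact.mk hp
  have hPmG : Subgroup.map G.subtype (P : Subgroup ↥G) ≤ G :=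
    Subgroup.map_subtype_le (P : Subgroup ↥G)
  have hPcGc : kClosure k (Subgroup.map G.subtype (P : Subgroup ↥G)) ≤ kClosure k G :=
    KCl.kClosure_mono k hPmG
  have hPmp : IsPGroup p ↥(Subgroup.map G.subtype (P : Subgroup ↥G)) :=
    P.isPGroup'.map G.subtype
  have hPcp : IsPGroup p ↥(kClosure k (Subgroup.map G.subtype (P : Subgroup ↥G))) :=
    KCl.isPGroup_kClosure hk hp _ hPmp
  have hQm_le : Subgroup.map (kClosure k G).subtype (Q : Subgroup ↥(kClosure k G)) ≤
      kClosure k (Subgroup.map G.subtype (P : Subgroup ↥G)) := by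
    rintro y ⟨yq, hyQ, rfl⟩
    obtain ⟨a, ha⟩ := Q.isPGroup' ⟨yq, hyQ⟩
    have ha' : ((kClosure k G).subtype yq) ^ p ^ a = 1 := by
      have h2 := congrArg (Subtype.val) (congrArg (Subtype.val) ha)
      push_cast at h2
      exact h2
    exact KCl.mem_kClosure_sylow G hnil hp P hk yq.2 ha'
  have hQ_le_Pc' : (Q : Subgroup ↥(kClosure k G)) ≤
      (kClosure k (Subgroup.map G.subtype (P : Subgroup ↥G))).comap (kClosure k G).subtype := by
    intro u hu
    exact Subgroup.mem_comap.mpr (hQm_le ⟨u, hu, rfl⟩)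
  have hPc'p : IsPGroup p
      ↥((kClosure k (Subgroup.map G.subtype (P : Subgroup ↥G))).comap
        (kClosure k G).subtype) := by
    intro u
    obtain ⟨a, ha⟩ := hPcp ⟨((u : ↥(kClosure k G)) : Equiv.Perm Ω), u.2⟩
    refine ⟨a, Subtype.ext (Subtype.ext ?_)⟩
    have h2 := congrArg (Subtype.val) ha
    push_cast at h2 ⊢
    exact h2
  have hPc'Q : (kClosure k (Subgroup.map G.subtype (P : Subgroup ↥G))).comap
      (kClosure k G).subtype = (Q : Subgroup ↥(kClosure k G)) :=
    Q.is_maximal' hPc'p hQ_le_Pc'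
  rw [← hPc'Q, Subgroup.map_comap_eq_self
    (by rw [Subgroup.range_subtype]; exact hPcGc)]
end

section
/- Let G be a finite nilpotent subgroup of Sym(Ω) for a finite set Ω, let p be a prime, and let P be a Sylow p-subgroup of G. Let Δ_1, …, Δ_k be orbits of P on Ω, let Δ = Δ_1 ∪ ⋯ ∪ Δ_k, and let L be the subgroup of G consisting of all elements fixing each Δ_i setwise. Then the permutation group induced by L on Δ equals the permutation group induced by P on Δ, i.e., L^Δ = P^Δ as subgroups of Sym(Δ). -/
lemma orderOf_dvd_card_of_semiregular {X : Type*} [Finite X] (c : Equiv.Perm X)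
    (h : ∀ (j : ℕ) (α : X), (c ^ j) α = α → c ^ j = 1) : orderOf c ∣ Nat.card X := by
  classical
  have : Fintype X := Fintype.ofFinite X
  set C := Subgroup.zpowers c with hC
  have hstab : ∀ α : X, MulAction.stabilizer C α = ⊥ := by
    intro α
    ext z
    simp only [MulAction.mem_stabilizer_iff, Subgroup.mem_bot]
    constructor
    · intro hz
      obtain ⟨j, hj⟩ := mem_powers_iff_mem_zpowers.mpr z.2
      have hz' : (c ^ j) α = α := by
        rw [show (c:Equiv.Perm X)^j = ↑z from hj]
        exact hz
      have := h j α hz'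
      ext
      simp [← hj, this]
    · rintro rfl; simp
  have horb : ∀ α : X, Nat.card (MulAction.orbit C α) = orderOf c := by
    intro α
    rw [Nat.card_congr (MulAction.orbitEquivQuotientStabilizer C α), hstab α,
      Nat.card_congr (QuotientGroup.quotientBot (G := C)).toEquiv]
    exact Nat.card_zpowers c
  have hsig := Nat.card_congr (MulAction.selfEquivSigmaOrbits C X)
  rw [Nat.card_eq_fintype_card (α := (Σ ω : MulAction.orbitRel.Quotient C X,
    MulAction.orbit C ω.out)), Fintype.card_sigma] at hsig
  have : ∀ ω : MulAction.orbitRel.Quotient C X,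
      Fintype.card (MulAction.orbit C ω.out) = orderOf c := by
    intro ω
    rw [← Nat.card_eq_fintype_card]
    exact horb _
  rw [Finset.sum_congr rfl (fun ω _ => this ω), Finset.sum_const, smul_eq_mul] at hsig
  exact ⟨Finset.univ.card, by rw [hsig, Nat.mul_comm]⟩ 

lemma commute_of_pow_eq_one {K : Type*} [Group K] [Finite K] (hnil : Group.IsNilpotent K)
    {p : ℕ} (hp : p.Prime) {x y : K} {a m : ℕ} (hx : x ^ p ^ a = 1) (hy : y ^ m = 1)
    (hm : ¬ p ∣ m) : Commute x y := by
  obtain ⟨e⟩ : Nonempty ((∀ q : (Nat.card K).primeFactors, ∀ Q : Sylow q K,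
      (↑Q : Subgroup K)) ≃* K) := (isNilpotent_of_finite_tfae.out 0 4).mp hnil
  set X := e.symm x with hX
  set Y := e.symm y with hY
  have hXY : X * Y = Y * X := by
    funext q Q
    haveI : Fact (Nat.Prime q.1) := ⟨Nat.prime_of_mem_primeFactors q.2⟩
    have hXpow : (X q Q) ^ p ^ a = 1 := by
      have h1 : X ^ p ^ a = 1 := by rw [hX, ← map_pow, hx, map_one]
      calc (X q Q) ^ p ^ a = (X ^ p ^ a) q Q := rfl
        _ = 1 := by rw [h1]; rfl
    have hYpow : (Y q Q) ^ m = 1 := by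
      have h1 : Y ^ m = 1 := by rw [hY, ← map_pow, hy, map_one]
      calc (Y q Q) ^ m = (Y ^ m) q Q := rfl
        _ = 1 := by rw [h1]; rfl
    obtain ⟨dX, hdX⟩ := Q.isPGroup' (X q Q)
    obtain ⟨dY, hdY⟩ := Q.isPGroup' (Y q Q)
    show (X q Q) * (Y q Q) = (Y q Q) * (X q Q)
    by_cases hqp : (q : ℕ) = p
    · have hone : Y q Q = 1 := by
        rw [← orderOf_eq_one_iff]
        have h1 : orderOf (Y q Q) ∣ m := orderOf_dvd_of_pow_eq_one hYpow
        have h2 : orderOf (Y q Q) ∣ p ^ dY := by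
          rw [← hqp]; exact orderOf_dvd_of_pow_eq_one hdY
        have hcop : Nat.Coprime (p ^ dY) m :=
          Nat.Coprime.pow_left dY ((Nat.Prime.coprime_iff_not_dvd hp).mpr hm)
        exact Nat.eq_one_of_dvd_coprimes hcop h2 h1
      rw [hone, mul_one, one_mul]
    · have hone : X q Q = 1 := by
        rw [← orderOf_eq_one_iff]
        have h1 : orderOf (X q Q) ∣ p ^ a := orderOf_dvd_of_pow_eq_one hXpow
        have h2 : orderOf (X q Q) ∣ (q : ℕ) ^ dX := orderOf_dvd_of_pow_eq_one hdX
        have hcop : Nat.Coprime ((q : ℕ) ^ dX) (p ^ a) :=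
          ((Nat.coprime_primes (Nat.prime_of_mem_primeFactors q.2) hp).mpr hqp).pow _ _
        exact Nat.eq_one_of_dvd_coprimes hcop h2 h1
      rw [hone, mul_one, one_mul]
  have := congrArg e hXY
  rw [map_mul, map_mul, hX, hY, e.apply_symm_apply, e.apply_symm_apply] at this
  exact this

lemma exists_primary_decomp {K : Type*} [Group K] [Finite K] (p : ℕ) (hp : p.Prime) (g : K) :
    ∃ x y : K, g = x * y ∧ Commute x y ∧ (∃ a, x ^ p ^ a = 1) ∧
      (∃ m, y ^ m = 1 ∧ ¬ p ∣ m) := by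
  set n := orderOf g with hn
  have hn0 : n ≠ 0 := (orderOf_pos g).ne'
  set a := n.factorization p with ha
  set pa := p ^ a with hpa
  set m := n / pa with hm
  have hnm : pa * m = n := Nat.ordProj_mul_ordCompl_eq_self n p
  have hpm : ¬ p ∣ m := Nat.not_dvd_ordCompl hp hn0
  have hcop : Nat.Coprime pa m := Nat.coprime_ordCompl hp hn0 |>.pow_left a
  have hbez : (1 : ℤ) = pa * Nat.gcdA pa m + m * Nat.gcdB pa m := by
    have := Nat.gcd_eq_gcd_ab pa m
    rwa [Nat.Coprime.gcd_eq_one hcop] at this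
  refine ⟨g ^ ((m : ℤ) * Nat.gcdB pa m), g ^ ((pa : ℤ) * Nat.gcdA pa m), ?_, ?_, ⟨a, ?_⟩,
    ⟨m, ?_, hpm⟩⟩
  · rw [← zpow_add, show (m : ℤ) * Nat.gcdB pa m + (pa : ℤ) * Nat.gcdA pa m = 1 from by
      linarith [hbez], zpow_one]
  · exact (Commute.refl g).zpow_zpow _ _
  · rw [← zpow_natCast, ← zpow_mul]
    have : (m : ℤ) * Nat.gcdB pa m * ((p ^ a : ℕ) : ℤ) = (n : ℤ) * Nat.gcdB pa m := by
      rw [← hnm]; push_cast [hpa]; ring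
    rw [this, zpow_mul, zpow_natCast, pow_orderOf_eq_one, one_zpow]
  · rw [← zpow_natCast, ← zpow_mul]
    have : (pa : ℤ) * Nat.gcdA pa m * ((m : ℕ) : ℤ) = (n : ℤ) * Nat.gcdA pa m := by
      rw [← hnm]; push_cast [hpa]; ring
    rw [this, zpow_mul, zpow_natCast, pow_orderOf_eq_one, one_zpow]

lemma mem_sylow_of_ppow {K : Type*} [Group K] [Finite K] (hnil : Group.IsNilpotent K)
    {p : ℕ} (hp : p.Prime) (P : Sylow p K) {x : K} {a : ℕ} (hx : x ^ p ^ a = 1) : x ∈ P := by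
  haveI : Fact p.Prime := ⟨hp⟩
  have hx' : IsPGroup p (Subgroup.zpowers x) := by
    rintro ⟨z, hz⟩
    refine ⟨a, ?_⟩
    obtain ⟨i, rfl⟩ := Subgroup.mem_zpowers_iff.mp hz
    ext
    push_cast
    rw [← zpow_natCast, ← zpow_mul, mul_comm, zpow_mul, zpow_natCast, hx, one_zpow]
  obtain ⟨Q, hQ⟩ := hx'.exists_le_sylow
  have hnorm : ∀ (q : ℕ) (_ : Fact q.Prime) (R : Sylow q K), (↑R : Subgroup K).Normal :=
    (isNilpotent_of_finite_tfae.out 0 3).mp hnil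
  haveI : Unique (Sylow p K) := Sylow.unique_of_normal P (hnorm p ⟨hp⟩ P)
  rw [Subsingleton.elim Q P] at hQ
  exact hQ (Subgroup.mem_zpowers x)


/-- If `G ≤ Sym(Ω)` is finite nilpotent, `P` a Sylow `p`-subgroup of `G`, `Δ₁, …, Δ_k`
orbits of `P`, `Δ` their union and `L` the set of elements of `G` fixing each `Δᵢ`
setwise, then the permutation group induced by `L` on `Δ` equals that induced by `P`. -/
theorem induced_group_eq_sylow_induced {Ω : Type*} [Finite Ω] (G : Subgroup (Equiv.Perm Ω))
    (hnil : Group.IsNilpotent ↥G) (p : ℕ) (hp : p.Prime) (P : Sylow p ↥G)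
    (k : ℕ) (Δi : Fin k → Set Ω)
    (horb : ∀ i, ∃ α : Ω, Δi i = MulAction.orbit ↥(Subgroup.map G.subtype ↑P) α)
    (Δ : Set Ω) (hΔ : Δ = ⋃ i, Δi i) :
    {σ : Equiv.Perm ↥Δ | ∃ g ∈ G, (∀ i, ⇑g '' Δi i = Δi i) ∧ ∀ a : ↥Δ, (σ a : Ω) = g a}
      = {σ : Equiv.Perm ↥Δ |
          ∃ g ∈ Subgroup.map G.subtype ↑P, ∀ a : ↥Δ, (σ a : Ω) = g a} := by
  classical
  haveI : Fact p.Prime := ⟨hp⟩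
  set P' : Subgroup (Equiv.Perm Ω) := Subgroup.map G.subtype ↑P with hP'
  -- smul on Ω by elements of P' is application
  have hsmul : ∀ (z : ↥P') (ω : Ω), z • ω = (z : Equiv.Perm Ω) ω := fun z ω => rfl
  -- elements of P' map each P'-orbit onto itself
  have himg : ∀ (α₀ : Ω) (h : Equiv.Perm Ω), h ∈ P' →
      h '' (MulAction.orbit ↥P' α₀) = MulAction.orbit ↥P' α₀ := by
    intro α₀ h hh
    ext ω
    constructor
    · rintro ⟨β, ⟨z, rfl⟩, rfl⟩
      exact ⟨(⟨h, hh⟩ : ↥P') * z, by simp [hsmul]⟩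
    · rintro ⟨z, rfl⟩
      refine ⟨((⟨h, hh⟩ : ↥P')⁻¹ * z) • α₀, ⟨_, rfl⟩, ?_⟩
      simp [hsmul]
  ext σ
  simp only [Set.mem_setOf_eq]
  constructor
  · rintro ⟨g, hgG, hfix, hσ⟩
    obtain ⟨x, y, hgxy, hcomm, ⟨a, hxa⟩, ⟨m, hym, hpm⟩⟩ :=
      exists_primary_decomp p hp (⟨g, hgG⟩ : ↥G)
    have hxP : x ∈ (P : Subgroup ↥G) := mem_sylow_of_ppow hnil hp P hxa
    have hxP' : (x : Equiv.Perm Ω) ∈ P' := ⟨x, hxP, rfl⟩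
    -- g = ↑x * ↑y as permutations
    have hgxy' : g = (x : Equiv.Perm Ω) * (y : Equiv.Perm Ω) := by
      have := congrArg (G.subtype) hgxy
      simpa using this
    -- ↑y commutes with every element of P'
    have hycomm : ∀ h ∈ P', Commute (y : Equiv.Perm Ω) h := by
      rintro h ⟨z, hz, rfl⟩
      obtain ⟨c, hc⟩ := P.isPGroup' ⟨z, hz⟩
      have hzc : z ^ p ^ c = 1 := by
        have := congrArg (Subtype.val) hc
        simpa using this
      have : Commute z y := commute_of_pow_eq_one hnil hp hzc hym hpm
      exact (this.map G.subtype).symm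
    -- key : ↑y fixes every point of every Δi
    have key : ∀ i, ∀ ω ∈ Δi i, (y : Equiv.Perm Ω) ω = ω := by
      intro i
      obtain ⟨α₀, hα₀⟩ := horb i
      -- ↑y maps Δi i to itself
      have hyim : ∀ ω, ω ∈ Δi i ↔ (y : Equiv.Perm Ω) ω ∈ Δi i := by
        have hx_img : (x : Equiv.Perm Ω) '' Δi i = Δi i := by
          rw [hα₀]; exact himg α₀ _ hxP'
        have hy_img : (y : Equiv.Perm Ω) '' Δi i = Δi i := by
          have h1 : (y : Equiv.Perm Ω) = (x : Equiv.Perm Ω)⁻¹ * g := by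
            rw [hgxy']; group
          have h2 : ⇑((x : Equiv.Perm Ω)⁻¹ * g) = ⇑(x : Equiv.Perm Ω)⁻¹ ∘ ⇑g := rfl
          have hxinv : ⇑(x : Equiv.Perm Ω)⁻¹ '' Δi i = Δi i := by
            conv_lhs => rw [← hx_img]
            rw [← Set.image_comp]
            simp
          rw [h1, h2, Set.image_comp, hfix i, hxinv]
        intro ω
        constructor
        · intro hω; rw [← hy_img]; exact ⟨ω, hω, rfl⟩
        · intro hω
          rw [← hy_img] at hω
          obtain ⟨ω', hω', he⟩ := hω
          rwa [← (y : Equiv.Perm Ω).injective he]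
      -- the restriction of ↑y to Δi i
      set c : Equiv.Perm ↥(Δi i) := (y : Equiv.Perm Ω).subtypePerm (fun ω => (hyim ω).symm) with hc
      -- powers of ↑y fixing one point of the orbit fix all of it
      have hsemi : ∀ (j : ℕ) (α : ↥(Δi i)), (c ^ j) α = α → c ^ j = 1 := by
        intro j α hα
        have hyj : ∀ h ∈ P', Commute ((y : Equiv.Perm Ω) ^ j) h :=
          fun h hh => (hycomm h hh).pow_left j
        have hα' : ((y : Equiv.Perm Ω) ^ j) (α : Ω) = α := by
          have := congrArg (Subtype.val) hα
          rwa [hc, Equiv.Perm.subtypePerm_pow] at this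
        -- transfer the fixed point to α₀
        obtain ⟨z, hzα⟩ : ∃ z : ↥P', (z : Equiv.Perm Ω) α₀ = (α : Ω) := by
          have hβ : (α : Ω) ∈ MulAction.orbit ↥P' α₀ := by rw [← hα₀]; exact α.2
          obtain ⟨z, hz⟩ := hβ
          exact ⟨z, hz⟩
        have hfix0 : ((y : Equiv.Perm Ω) ^ j) α₀ = α₀ := by
          have h1 := hyj _ z.2
          have h2 : ((y : Equiv.Perm Ω) ^ j) ((z : Equiv.Perm Ω) α₀)
              = (z : Equiv.Perm Ω) (((y : Equiv.Perm Ω) ^ j) α₀) := by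
            have := congrArg (fun f => f α₀) h1
            simpa using this
          rw [hzα, hα'] at h2
          rw [← hzα] at h2
          exact ((z : Equiv.Perm Ω).injective h2).symm
        ext β
        have hβ : (β : Ω) ∈ MulAction.orbit ↥P' α₀ := by rw [← hα₀]; exact β.2
        obtain ⟨z', hz'⟩ := hβ
        have h1 := hyj _ z'.2
        have h2 : ((y : Equiv.Perm Ω) ^ j) ((z' : Equiv.Perm Ω) α₀)
            = (z' : Equiv.Perm Ω) (((y : Equiv.Perm Ω) ^ j) α₀) := by
          have := congrArg (fun f => f α₀) h1
          simpa using this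
        rw [hfix0] at h2
        have hz'' : (z' : Equiv.Perm Ω) α₀ = (β : Ω) := by rw [← hz']; rfl
        rw [hz''] at h2
        show ((c ^ j) β : Ω) = ((1 : Equiv.Perm ↥(Δi i)) β : Ω)
        rw [hc, Equiv.Perm.subtypePerm_pow]
        simpa using h2
      -- orderOf c divides both a power of p and m
      have hd1 : orderOf c ∣ Nat.card ↥(Δi i) := orderOf_dvd_card_of_semiregular c hsemi
      have hd2 : orderOf c ∣ m := by
        apply orderOf_dvd_of_pow_eq_one
        rw [hc, Equiv.Perm.subtypePerm_pow]
        have : ((y : Equiv.Perm Ω) ^ m) = 1 := by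
          have := congrArg (G.subtype) hym
          simpa using this
        simp [this]
        ext; simp
      have hcard : Nat.card ↥(Δi i) ∣ Nat.card ↥P' := by
        rw [hα₀, Nat.card_congr (MulAction.orbitEquivQuotientStabilizer ↥P' α₀),
          Subgroup.card_eq_card_quotient_mul_card_subgroup
            (MulAction.stabilizer ↥P' α₀)]
        exact Dvd.intro _ rfl
      obtain ⟨nn, hnn⟩ := (P.isPGroup'.map G.subtype).exists_card_eq
      have hd3 : orderOf c ∣ p ^ nn := by
        rw [← hnn]
        exact hd1.trans hcard
      have hone : c = 1 := by
        rw [← orderOf_eq_one_iff]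
        exact Nat.eq_one_of_dvd_coprimes
          (Nat.Coprime.pow_left nn ((Nat.Prime.coprime_iff_not_dvd hp).mpr hpm)) hd3 hd2
      intro ω hω
      have h1 := Equiv.Perm.ext_iff.mp hone ⟨ω, hω⟩
      have h2 := congrArg (Subtype.val) h1
      simpa [hc] using h2
    refine ⟨(x : Equiv.Perm Ω), hxP', ?_⟩
    intro b
    rw [hσ b, hgxy']
    have hb : ∃ i, (b : Ω) ∈ Δi i := by
      have hb2 : (b : Ω) ∈ ⋃ i, Δi i := by rw [← hΔ]; exact b.2
      exact Set.mem_iUnion.mp hb2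
    obtain ⟨i, hbi⟩ := hb
    show (x : Equiv.Perm Ω) ((y : Equiv.Perm Ω) (b : Ω)) = (x : Equiv.Perm Ω) (b : Ω)
    rw [key i _ hbi]
  · rintro ⟨g, hgP', hσ⟩
    refine ⟨g, ?_, ?_, hσ⟩
    · obtain ⟨z, _, rfl⟩ := hgP'
      exact z.2
    · intro i
      obtain ⟨α₀, hα₀⟩ := horb i
      rw [hα₀]
      exact himg α₀ g hgP'
end

section
/- Let G be a finite nilpotent group acting transitively and faithfully on a finite set Ω with |Ω| = n, and let H be a Hall π-subgroup of G, where π = π(H) is the set of prime divisors of |H|. Then every H-orbit on Ω has size n_π, where n_π = ∏_{p ∈ π} n_p and n_p is the largest power of p dividing n. -/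
open Subgroup MulAction Pointwise

/-- A subgroup whose order is coprime to the index of a normal subgroup `H` is
contained in `H`. -/
theorem le_of_card_coprime_index {G : Type*} [Group G] [Finite G] (H K : Subgroup G)
    [H.Normal] (h : (Nat.card ↥K).Coprime H.index) : K ≤ H := by
  set f := QuotientGroup.mk' H with hf
  have h1 : Nat.card (K.map f) ∣ Nat.card K :=
    Subgroup.card_dvd_of_surjective _ (f.subgroupMap_surjective K)
  have h2 : Nat.card (K.map f) ∣ H.index := by
    rw [Subgroup.index_eq_card]
    exact Subgroup.card_subgroup_dvd_card _
  have h3 : Nat.card (K.map f) ∣ 1 := h ▸ Nat.dvd_gcd h1 h2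
  have h4 : K.map f = ⊥ := Subgroup.card_eq_one.mp (Nat.eq_one_of_dvd_one h3)
  rw [Subgroup.map_eq_bot_iff, QuotientGroup.ker_mk'] at h4
  exact h4

/-- A Hall subgroup of a finite nilpotent group is normal. -/
theorem hall_normal {G : Type*} [Group G] [Finite G] (hnil : Group.IsNilpotent G)
    (H : Subgroup G) (hHall : Nat.Coprime (Nat.card ↥H) H.index) : H.Normal := by
  have hnc : NormalizerCondition G := normalizerCondition_of_isNilpotent
  rw [← Subgroup.normalizer_eq_top_iff]
  apply normalizerCondition_iff_only_full_group_self_normalizing.mp hnc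
  refine le_antisymm ?_ Subgroup.le_normalizer
  intro g hg
  set K : Subgroup G := MulAut.conj g • H with hKdef
  have hcard : Nat.card K = Nat.card H :=
    Nat.card_congr (Subgroup.equivSMul (MulAut.conj g) H).symm.toEquiv
  have hKN : K ≤ (Subgroup.normalizer (H : Set G)) := by
    intro x hx
    rw [Subgroup.mem_pointwise_smul_iff_inv_smul_mem] at hx
    have hx' : g⁻¹ * x * g ∈ (Subgroup.normalizer (H : Set G)) := Subgroup.le_normalizer (by simpa using hx)
    have := (Subgroup.mem_normalizer_iff.mp hg (g⁻¹ * x * g)).mp hx'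
    simpa [mul_assoc] using this
  haveI : (H.subgroupOf (Subgroup.normalizer (H : Set G))).Normal := Subgroup.normal_in_normalizer
  have hsub : K.subgroupOf (Subgroup.normalizer (H : Set G)) ≤ H.subgroupOf (Subgroup.normalizer (H : Set G)) := by
    apply le_of_card_coprime_index
    have hc1 : Nat.card (K.subgroupOf (Subgroup.normalizer (H : Set G))) = Nat.card K :=
      Nat.card_congr (Subgroup.subgroupOfEquivOfLe hKN).toEquiv
    have hc2 : (H.subgroupOf (Subgroup.normalizer (H : Set G))).index ∣ H.index :=
      Subgroup.relIndex_dvd_index_of_le Subgroup.le_normalizer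
    rw [hc1, hcard]
    exact Nat.Coprime.coprime_dvd_right hc2 hHall
  have hKH : K ≤ H := by
    intro x hx
    have hx2 : (⟨x, hKN hx⟩ : (Subgroup.normalizer (H : Set G))) ∈ K.subgroupOf (Subgroup.normalizer (H : Set G)) := hx
    exact hsub hx2
  have hKeq : K = H := Subgroup.eq_of_le_of_card_ge hKH (le_of_eq hcard.symm)
  rw [Subgroup.mem_normalizer_iff]
  intro h
  constructor
  · intro hh
    have : MulAut.conj g • h ∈ K := Subgroup.smul_mem_pointwise_smul _ _ _ hh
    rw [hKeq] at this
    simpa using this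
  · intro hh
    have hh' : g * h * g⁻¹ ∈ K := by rw [hKeq]; exact hh
    rw [hKdef, Subgroup.mem_pointwise_smul_iff_inv_smul_mem] at hh'
    simpa [mul_assoc] using hh'

/-- If a finite nilpotent group `G` acts transitively and faithfully on a finite set `Ω`
of size `n`, and `H` is a Hall subgroup of `G`, then every `H`-orbit has size
`n_π = ∏_{p ∈ π(H)} n_p`. -/
theorem hall_orbit_size {G : Type*} [Group G] [Finite G] (hnil : Group.IsNilpotent G)
    {Ω : Type*} [Finite Ω] [MulAction G Ω] [FaithfulSMul G Ω]
    [MulAction.IsPretransitive G Ω]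
    (H : Subgroup G) (hHall : Nat.Coprime (Nat.card ↥H) H.index) (α : Ω) :
    Nat.card ↥(MulAction.orbit H α) =
      ∏ p ∈ (Nat.card ↥H).primeFactors, p ^ ((Nat.card Ω).factorization p) := by
  classical
  haveI hN : H.Normal := hall_normal hnil H hHall
  set K := MulAction.stabilizer G α with hKdef
  set T := H ⊔ K with hTdef
  -- the orbit size is the relative index of the stabilizer in `H`
  have hstab : MulAction.stabilizer H α = K.subgroupOf H := by ext; rfl
  have horb : Nat.card ↥(MulAction.orbit H α) = K.relIndex H := by
    rw [Nat.card_coe_set_eq, ← MulAction.index_stabilizer, hstab]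
    rfl
  have hn : Nat.card Ω = K.index := (MulAction.index_stabilizer_of_transitive G α).symm
  set m := K.relIndex H with hmdef
  set x := H.relIndex T with hxdef
  set y := H.relIndex K with hydef
  set z := K.relIndex T with hzdef
  -- Nonvanishing
  have hm0 : m ≠ 0 := Subgroup.index_ne_zero_of_finite
  have hx0 : x ≠ 0 := Subgroup.index_ne_zero_of_finite
  have hy0 : y ≠ 0 := Subgroup.index_ne_zero_of_finite
  have hz0 : z ≠ 0 := Subgroup.index_ne_zero_of_finite
  have hj0 : T.index ≠ 0 := Subgroup.index_ne_zero_of_finite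
  -- the key multiplicative identities
  have e1 : (H ⊓ K).relIndex H * x = (H ⊓ K).relIndex T :=
    Subgroup.relIndex_mul_relIndex _ _ _ inf_le_left le_sup_left
  have e2 : (H ⊓ K).relIndex K * z = (H ⊓ K).relIndex T :=
    Subgroup.relIndex_mul_relIndex _ _ _ inf_le_right le_sup_right
  have e : m * x = y * z := by
    calc m * x = (H ⊓ K).relIndex H * x := by rw [hmdef, Subgroup.inf_relIndex_left]
      _ = (H ⊓ K).relIndex T := e1
      _ = (H ⊓ K).relIndex K * z := e2.symm
      _ = y * z := by rw [hydef, Subgroup.inf_relIndex_right]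
  have e3 : z * T.index = K.index := Subgroup.relIndex_mul_index le_sup_right
  -- divisibilities by `H.index`
  have hxdvd : x ∣ H.index := Subgroup.relIndex_dvd_index_of_le le_sup_left
  have hydvd : y ∣ H.index := Subgroup.relIndex_dvd_index_of_normal H K
  have hjdvd : T.index ∣ H.index := Subgroup.index_dvd_of_le le_sup_left
  -- `m` divides the order of `H`
  have hmdvd : m ∣ Nat.card H := by
    rw [hmdef, Subgroup.relIndex]
    exact Subgroup.index_dvd_card _
  have hH0 : Nat.card H ≠ 0 := Nat.card_pos.ne'
  have hmπ : m.primeFactors ⊆ (Nat.card H).primeFactors :=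
    Nat.primeFactors_mono hmdvd hH0
  -- equality of `p`-adic valuations for `p ∈ π`
  have key : ∀ p ∈ (Nat.card H).primeFactors,
      m.factorization p = (Nat.card Ω).factorization p := by
    intro p hp
    have hpp : p.Prime := Nat.prime_of_mem_primeFactors hp
    have hpH : ¬ p ∣ H.index := by
      intro hd
      have : p ∣ 1 := hHall ▸ Nat.dvd_gcd (Nat.dvd_of_mem_primeFactors hp) hd
      exact hpp.one_lt.ne' (Nat.eq_one_of_dvd_one this)
    have hxf : x.factorization p = 0 :=
      Nat.factorization_eq_zero_of_not_dvd fun hdvd => hpH (hdvd.trans hxdvd)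
    have hyf : y.factorization p = 0 :=
      Nat.factorization_eq_zero_of_not_dvd fun hdvd => hpH (hdvd.trans hydvd)
    have hjf : (T.index).factorization p = 0 :=
      Nat.factorization_eq_zero_of_not_dvd fun hdvd => hpH (hdvd.trans hjdvd)
    have e' : m.factorization p + x.factorization p
        = y.factorization p + z.factorization p := by
      have : (m * x).factorization = (y * z).factorization := by rw [e]
      rw [Nat.factorization_mul hm0 hx0, Nat.factorization_mul hy0 hz0] at this
      have := congrArg (fun f : ℕ →₀ ℕ => f p) this
      simpa using this
    have e3' : (Nat.card Ω).factorization p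
        = z.factorization p + (T.index).factorization p := by
      have : (z * T.index).factorization = (Nat.card Ω).factorization := by rw [e3, hn]
      rw [Nat.factorization_mul hz0 hj0] at this
      have := congrArg (fun f : ℕ →₀ ℕ => f p) this
      simpa using this.symm
    omega
  -- put everything together
  rw [horb]
  have hmprod : ∏ p ∈ m.primeFactors, p ^ m.factorization p = m := by
    conv_rhs => rw [← Nat.factorization_prod_pow_eq_self hm0]
    rw [Nat.prod_factorization_eq_prod_primeFactors]
  calc m = ∏ p ∈ m.primeFactors, p ^ m.factorization p := hmprod.symm
    _ = ∏ p ∈ (Nat.card H).primeFactors, p ^ m.factorization p := by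
        apply Finset.prod_subset hmπ
        intro p _ hpm
        rw [Nat.factorization_eq_zero_of_not_dvd, pow_zero]
        intro hdvd
        exact hpm (Nat.mem_primeFactors.mpr ⟨by
          by_contra hnp
          exact hpm (by simp_all [Nat.factorization_eq_zero_of_not_prime]), hdvd, hm0⟩)
    _ = ∏ p ∈ (Nat.card H).primeFactors, p ^ ((Nat.card Ω).factorization p) :=
        Finset.prod_congr rfl (fun p hp => by rw [key p hp])
end

section
/- Let G be a finite abelian group with |G| > 1. Then G is totally (n(G)+1)-closed but not totally n(G)-closed. -/
section Helly


lemma card_le_of_exponent_gen {H : Type*} [CommGroup H] [Finite H] {p : ℕ} (hp : 0 < p)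
    (S : Finset H) (hS : Subgroup.closure (S : Set H) = ⊤) (hexp : ∀ h : H, h ^ p = 1) :
    Nat.card H ≤ p ^ S.card := by
  classical
  have hpow : ∀ (x : H) (a b : ℕ), a ≡ b [MOD p] → x ^ a = x ^ b := by
    intro x a b hab
    have h1 : ∀ m : ℕ, x ^ m = x ^ (m % p) := by
      intro m
      conv_lhs => rw [← Nat.div_add_mod m p]
      rw [pow_add, pow_mul, hexp, one_pow, one_mul]
    rw [h1 a, h1 b, hab]
  set F : (↑S → Fin p) → H := fun k => ∏ x : ↑S, (x : H) ^ (k x : ℕ) with hF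
  have hmul : ∀ k k', F k * F k' = F (fun x => ⟨((k x : ℕ) + (k' x : ℕ)) % p, Nat.mod_lt _ hp⟩) := by
    intro k k'
    rw [hF]
    simp only [← Finset.prod_mul_distrib]
    refine Finset.prod_congr rfl fun x _ => ?_
    rw [← pow_add]
    exact hpow _ _ _ (Nat.mod_modEq _ p).symm
  have hone : F (fun _ => ⟨0, hp⟩) = 1 := by
    simp [hF]
  have hinv : ∀ k, (F k)⁻¹ = F (fun x => ⟨(p - (k x : ℕ)) % p, Nat.mod_lt _ hp⟩) := by
    intro k
    refine inv_eq_of_mul_eq_one_right ?_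
    rw [hmul]
    rw [← hone]
    congr 1
    funext x
    ext
    simp only
    have h1 : ((k x : ℕ) + (p - (k x : ℕ)) % p) % p = 0 % p := by
      have : ((k x : ℕ) + (p - (k x : ℕ)) % p) ≡ ((k x : ℕ) + (p - (k x : ℕ))) [MOD p] :=
        Nat.ModEq.add_left _ (Nat.mod_modEq _ p)
      rw [Nat.add_sub_cancel' (le_of_lt (k x).2)] at this
      calc ((k x : ℕ) + (p - (k x : ℕ)) % p) % p = p % p := this
        _ = 0 % p := by rw [Nat.mod_self, Nat.zero_mod]
    simpa using h1
  set T : Subgroup H :=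
    { carrier := Set.range F
      one_mem' := ⟨fun _ => ⟨0, hp⟩, hone⟩
      mul_mem' := by
        rintro _ _ ⟨k, rfl⟩ ⟨k', rfl⟩
        exact ⟨_, (hmul k k').symm⟩
      inv_mem' := by
        rintro _ ⟨k, rfl⟩
        exact ⟨_, (hinv k).symm⟩ } with hT
  have hgen : ∀ s ∈ S, s ∈ T := by
    intro s hs
    refine ⟨fun x => if x = ⟨s, hs⟩ then ⟨1 % p, Nat.mod_lt _ hp⟩ else ⟨0, hp⟩, ?_⟩
    rw [hF]
    simp only
    rw [Fintype.prod_eq_single (⟨s, hs⟩ : ↑S)]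
    · simp only [if_pos rfl]
      exact (hpow s _ 1 (Nat.mod_modEq 1 p)).trans (pow_one s)
    · intro x hx
      simp [if_neg hx]
  have hsurj : Function.Surjective F := by
    intro h
    have : h ∈ T := by
      have : Subgroup.closure (S : Set H) ≤ T := (Subgroup.closure_le T).mpr hgen
      rw [hS] at this
      exact this (Subgroup.mem_top h)
    exact this
  calc Nat.card H ≤ Nat.card (↑S → Fin p) := Nat.card_le_card_of_surjective F hsurj
    _ = p ^ S.card := by
      rw [Nat.card_fun]
      simp [Nat.card_eq_fintype_card]

lemma card_ker_pow_le {G : Type*} [CommGroup G] [Finite G] {p : ℕ} (hp : 0 < p) :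
    Nat.card (MonoidHom.ker (powMonoidHom p : G →* G)) ≤ p ^ Group.rank G := by
  classical
  set f : G →* G := powMonoidHom p with hf
  have h1 : Nat.card (G ⧸ f.ker) = Nat.card f.range :=
    Nat.card_congr (QuotientGroup.quotientKerEquivRange f).toEquiv
  have h2 : Nat.card G = Nat.card (G ⧸ f.ker) * Nat.card f.ker :=
    Subgroup.card_eq_card_quotient_mul_card_subgroup f.ker
  have h3 : Nat.card G = Nat.card (G ⧸ f.range) * Nat.card f.range :=
    Subgroup.card_eq_card_quotient_mul_card_subgroup f.range
  have hker : Nat.card f.ker = Nat.card (G ⧸ f.range) := by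
    have hpos : 0 < Nat.card f.range := Nat.card_pos
    have := h2.symm.trans h3
    rw [h1] at this
    -- card range * card ker = card (G ⧸ range) * card range
    exact Nat.eq_of_mul_eq_mul_left hpos (by linarith [this])
  rw [hker]
  obtain ⟨S, hScard, hSgen⟩ := Group.rank_spec G
  have hexp : ∀ y : G ⧸ f.range, y ^ p = 1 := by
    intro y
    induction y using Quotient.inductionOn with
    | _ x =>
      show (QuotientGroup.mk x : G ⧸ f.range) ^ p = 1
      rw [← QuotientGroup.mk_pow, QuotientGroup.eq_one_iff]
      exact ⟨x, rfl⟩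
  have hgen : Subgroup.closure ((S.image (QuotientGroup.mk' f.range) : Finset (G ⧸ f.range)) :
      Set (G ⧸ f.range)) = ⊤ := by
    rw [Finset.coe_image, ← MonoidHom.map_closure, hSgen,
      Subgroup.map_top_of_surjective _ (QuotientGroup.mk'_surjective f.range)]
  calc Nat.card (G ⧸ f.range) ≤ p ^ (S.image (QuotientGroup.mk' f.range)).card :=
        card_le_of_exponent_gen hp _ hgen hexp
    _ ≤ p ^ Group.rank G := Nat.pow_le_pow_right hp (le_of_le_of_eq Finset.card_image_le hScard)




lemma subgroup_eq_of_le_of_card_le {G : Type*} [Group G] [Finite G] {H K : Subgroup G}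
    (h : H ≤ K) (hc : Nat.card K ≤ Nat.card H) : H = K := by
  have h1 : (H : Set G) ⊆ (K : Set G) := h
  have h2 : (K : Set G).ncard ≤ (H : Set G).ncard := by
    rwa [← Nat.card_coe_set_eq, ← Nat.card_coe_set_eq]
  exact SetLike.ext' (Set.eq_of_subset_of_ncard_le h1 h2 (Set.toFinite _))

lemma greedy_lemma {G : Type*} [CommGroup G] [Finite G] {p : ℕ} (hp : p.Prime)
    {ι : Type*} (K : ι → Subgroup G) {E : Subgroup G} {m : ℕ} (hEpow : Nat.card E = p ^ m)
    (hK : (⨅ i, K i ⊓ E) = ⊥) :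
    ∀ (k : ℕ) (D : Subgroup G), D ≤ E → Nat.card D ≤ p ^ k →
      ∃ s : Finset ι, s.card ≤ k ∧ D ⊓ (⨅ j ∈ s, K j ⊓ E) = ⊥ := by
  classical
  intro k
  induction k with
  | zero =>
    intro D _ hcard
    refine ⟨∅, le_refl _, ?_⟩
    have : D = ⊥ := Subgroup.eq_bot_of_card_le D (by simpa using hcard)
    simp [this]
  | succ k IHk =>
    intro D hDE hcard
    by_cases hD : D = ⊥
    · exact ⟨∅, Nat.zero_le _, by simp [hD]⟩
    · have hex : ∃ i, ¬ D ≤ K i ⊓ E := by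
        by_contra hcon
        push_neg at hcon
        exact hD (le_bot_iff.mp (hK ▸ le_iInf hcon))
      obtain ⟨i, hi⟩ := hex
      set D' := D ⊓ (K i ⊓ E) with hD'
      have hD'le : D' ≤ D := inf_le_left
      have hne : D' ≠ D := by
        intro h
        exact hi (h ▸ inf_le_right)
      -- cards are p-powers
      have hDdvd : Nat.card D ∣ p ^ m := hEpow ▸ Subgroup.card_dvd_of_le hDE
      obtain ⟨b, hbm, hb⟩ := (Nat.dvd_prime_pow hp).mp hDdvd
      have hD'dvd : Nat.card D' ∣ p ^ b := hb ▸ Subgroup.card_dvd_of_le hD'le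
      obtain ⟨b', hb'b, hb'⟩ := (Nat.dvd_prime_pow hp).mp hD'dvd
      have hblt : b' < b := by
        rcases lt_or_eq_of_le hb'b with h | h
        · exact h
        · exfalso
          exact hne (subgroup_eq_of_le_of_card_le hD'le (by rw [hb, hb', h]))
      have hble : b ≤ k + 1 := by
        rw [hb] at hcard
        exact (Nat.pow_le_pow_iff_right hp.one_lt).mp hcard
      have hcard' : Nat.card D' ≤ p ^ k := by
        rw [hb']
        exact Nat.pow_le_pow_right hp.pos (by omega)
      obtain ⟨s, hscard, hsbot⟩ := IHk D' (hD'le.trans hDE) hcard'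
      refine ⟨insert i s, (Finset.card_insert_le _ _).trans (by omega), ?_⟩
      rw [Finset.iInf_insert, ← inf_assoc]
      rw [hD'] at hsbot
      rw [show D ⊓ (K i ⊓ E) ⊓ ⨅ j ∈ s, K j ⊓ E = D ⊓ (K i ⊓ E) ⊓ ⨅ j ∈ s, K j ⊓ E from rfl]
      exact hsbot

lemma psubgroup_eq_bot {G : Type*} [CommGroup G] {p : ℕ} (hp : p.Prime) (hG : IsPGroup p G)
    (H : Subgroup G) (h : H ⊓ MonoidHom.ker (powMonoidHom p : G →* G) = ⊥) : H = ⊥ := by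
  rw [Subgroup.eq_bot_iff_forall]
  intro d hd
  by_contra hd1
  obtain ⟨k, hk⟩ := hG d
  have hord : orderOf d ∣ p ^ k := orderOf_dvd_of_pow_eq_one hk
  obtain ⟨r, hrk, hr⟩ := (Nat.dvd_prime_pow hp).mp hord
  have hr0 : r ≠ 0 := by
    intro h0
    rw [h0, pow_zero] at hr
    exact hd1 (orderOf_eq_one_iff.mp hr)
  set d' := d ^ p ^ (r - 1) with hd'
  have hd'p : d' ^ p = 1 := by
    rw [hd', ← pow_mul, ← pow_succ, Nat.sub_add_cancel (Nat.one_le_iff_ne_zero.mpr hr0),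
      ← hr, pow_orderOf_eq_one]
  have hd'mem : d' ∈ H ⊓ MonoidHom.ker (powMonoidHom p : G →* G) := by
    constructor
    · exact Subgroup.pow_mem H hd _
    · exact hd'p
  rw [h, Subgroup.mem_bot] at hd'mem
  have : orderOf d ∣ p ^ (r - 1) := orderOf_dvd_of_pow_eq_one (hd' ▸ hd'mem)
  rw [hr] at this
  have := (Nat.pow_dvd_pow_iff_le_right hp.one_lt).mp this
  omega

universe u v

lemma pHelly {p : ℕ} (hp : p.Prime) :
    ∀ (c : ℕ) {G : Type u} [CommGroup G] [Finite G], Nat.card G = c →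
    IsPGroup p G → ∀ {n : ℕ}, Group.rank G ≤ n →
    ∀ {ι : Type v} (a : ι → G) (K : ι → Subgroup G),
    (∀ s : Finset ι, s.card ≤ n + 1 → ∃ x : G, ∀ i ∈ s, (a i)⁻¹ * x ∈ K i) →
    ∃ x : G, ∀ i, (a i)⁻¹ * x ∈ K i := by
  classical
  intro c
  induction c using Nat.strong_induction_on with
  | _ c IH =>
  intro G _ _ hc hG n hn ι a K hsys
  by_cases hcommon : ∃ N : Subgroup G, N ≠ ⊥ ∧ ∀ i, N ≤ K i
  · -- quotient by the common subgroup
    obtain ⟨N, hN0, hNle⟩ := hcommon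
    have hcardN : 1 < Nat.card N := N.one_lt_card_iff_ne_bot.mpr hN0
    have hsplit : Nat.card G = Nat.card (G ⧸ N) * Nat.card N :=
      Subgroup.card_eq_card_quotient_mul_card_subgroup N
    have hQlt : Nat.card (G ⧸ N) < c := by
      have hpos : 0 < Nat.card (G ⧸ N) := Nat.card_pos
      rw [← hc]
      calc Nat.card (G ⧸ N) < Nat.card (G ⧸ N) * Nat.card N := by
            exact lt_mul_of_one_lt_right hpos hcardN
        _ = Nat.card G := hsplit.symm
    have hrankQ : Group.rank (G ⧸ N) ≤ n :=
      (Group.rank_le_of_surjective (QuotientGroup.mk' N)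
        (QuotientGroup.mk'_surjective N)).trans hn
    obtain ⟨xbar, hxbar⟩ := IH (Nat.card (G ⧸ N)) hQlt rfl (hG.to_quotient N) hrankQ
      (fun i => QuotientGroup.mk' N (a i)) (fun i => (K i).map (QuotientGroup.mk' N))
      (by
        intro s hs
        obtain ⟨x, hx⟩ := hsys s hs
        refine ⟨QuotientGroup.mk' N x, fun i hi => ?_⟩
        rw [← map_inv, ← map_mul]
        exact Subgroup.mem_map_of_mem _ (hx i hi))
    obtain ⟨x, rfl⟩ := QuotientGroup.mk'_surjective N xbar
    refine ⟨x, fun i => ?_⟩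
    have := hxbar i
    rw [← map_inv, ← map_mul] at this
    obtain ⟨k, hk, hk2⟩ := this
    have : k⁻¹ * ((a i)⁻¹ * x) ∈ N := by
      rw [← QuotientGroup.eq]
      exact hk2
    have h2 : k * (k⁻¹ * ((a i)⁻¹ * x)) ∈ K i := Subgroup.mul_mem _ hk (hNle i this)
    simpa using h2
  · by_cases hc1 : Nat.card G ≤ 1
    · have hsub : Subsingleton G := by
        have : Nat.card G = 1 := le_antisymm hc1 Nat.card_pos
        exact (Nat.card_eq_one_iff_unique.mp this).1
      exact ⟨1, fun i => by
        rw [Subsingleton.elim ((a i)⁻¹ * 1) (1 : G)]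
        exact Subgroup.one_mem _⟩
    · set E := MonoidHom.ker (powMonoidHom p : G →* G) with hE
      have hKbot : (⨅ i, K i ⊓ E) = ⊥ := by
        by_contra hne
        exact hcommon ⟨⨅ i, K i ⊓ E, hne, fun i => (iInf_le _ i).trans inf_le_left⟩
      have hEdvd : Nat.card E ∣ Nat.card G := Subgroup.card_subgroup_dvd_card E
      haveI : Fact p.Prime := ⟨hp⟩
      obtain ⟨mG, hmG⟩ := IsPGroup.exists_card_eq hG
      obtain ⟨m, hmm, hm⟩ := (Nat.dvd_prime_pow hp).mp (hmG ▸ hEdvd)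
      have hEle : Nat.card E ≤ p ^ n :=
        (card_ker_pow_le hp.pos).trans (Nat.pow_le_pow_right hp.pos hn)
      obtain ⟨s, hscard, hsbot⟩ := greedy_lemma hp K hm hKbot n E le_rfl hEle
      -- E ⊓ ⨅ j ∈ s, (K j ⊓ E) = ⊥  implies  (⨅ j ∈ s, K j) ⊓ E = ⊥
      have hDbot : (⨅ j ∈ s, K j) ⊓ E = ⊥ := by
        rw [← hsbot]
        refine le_antisymm ?_ ?_
        · refine le_inf inf_le_right ?_
          refine le_iInf fun j => le_iInf fun hj => ?_
          exact le_inf ((inf_le_left).trans (iInf_le_of_le j (iInf_le _ hj))) inf_le_right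
        · refine le_inf ?_ inf_le_left
          refine le_iInf fun j => le_iInf fun hj => ?_
          exact (inf_le_right).trans (iInf_le_of_le j ((iInf_le _ hj).trans inf_le_left))
      have hD0 : (⨅ j ∈ s, K j) = ⊥ := psubgroup_eq_bot hp hG _ hDbot
      obtain ⟨e, he⟩ := hsys s (hscard.trans (Nat.le_succ n))
      refine ⟨e, fun i => ?_⟩
      obtain ⟨y, hy⟩ := hsys (insert i s) ((Finset.card_insert_le _ _).trans (by omega))
      have hyi : (a i)⁻¹ * y ∈ K i := hy i (Finset.mem_insert_self i s)
      have hd : e⁻¹ * y ∈ ⨅ j ∈ s, K j := by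
        refine Subgroup.mem_iInf.mpr fun j => Subgroup.mem_iInf.mpr fun hj => ?_
        have h1 : (a j)⁻¹ * e ∈ K j := he j hj
        have h2 : (a j)⁻¹ * y ∈ K j := hy j (Finset.mem_insert_of_mem hj)
        have : ((a j)⁻¹ * e)⁻¹ * ((a j)⁻¹ * y) ∈ K j :=
          Subgroup.mul_mem _ (Subgroup.inv_mem _ h1) h2
        simpa [mul_assoc] using this
      rw [hD0, Subgroup.mem_bot] at hd
      have hye : e = y := inv_mul_eq_one.mp hd
      rw [hye]
      exact hyi

lemma helly_main :
    ∀ (c : ℕ) {G : Type u} [CommGroup G] [Finite G], Nat.card G = c →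
    ∀ {n : ℕ}, Group.rank G ≤ n →
    ∀ {ι : Type v} (a : ι → G) (K : ι → Subgroup G),
    (∀ s : Finset ι, s.card ≤ n + 1 → ∃ x : G, ∀ i ∈ s, (a i)⁻¹ * x ∈ K i) →
    ∃ x : G, ∀ i, (a i)⁻¹ * x ∈ K i := by
  classical
  intro c
  induction c using Nat.strong_induction_on with
  | _ c IH =>
  intro G _ _ hc n hn ι a K hsys
  by_cases hc1 : Nat.card G ≤ 1
  · have hsub : Subsingleton G := by
      have : Nat.card G = 1 := le_antisymm hc1 Nat.card_pos
      exact (Nat.card_eq_one_iff_unique.mp this).1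
    exact ⟨1, fun i => by
      rw [Subsingleton.elim ((a i)⁻¹ * 1) (1 : G)]
      exact Subgroup.one_mem _⟩
  · set N := Nat.card G with hN
    have hN0 : N ≠ 0 := Nat.card_pos.ne'
    have hN1 : 1 < N := by omega
    set p := N.minFac with hpdef
    have hp : p.Prime := Nat.minFac_prime (by omega)
    haveI : Fact p.Prime := ⟨hp⟩
    have hpdvd : p ∣ N := Nat.minFac_dvd N
    set v := N.factorization p with hv
    set P := p ^ v with hP
    set t := N / P with ht
    have hvpos : 0 < v := hp.factorization_pos_of_dvd hN0 hpdvd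
    have htP : P * t = N := Nat.ordProj_mul_ordCompl_eq_self N p
    have hcop : Nat.Coprime P t := Nat.Coprime.pow_left _ (Nat.coprime_ordCompl hp hN0)
    have haux : ∀ (g : G) (s1 s2 : ℕ), s1 ≡ s2 [MOD N] → g ^ s1 = g ^ s2 := by
      intro g s1 s2 hmod
      exact pow_eq_pow_iff_modEq.mpr (hmod.of_dvd (orderOf_dvd_natCard g))
    by_cases hPG : IsPGroup p G
    · exact pHelly hp c hc hPG hn a K hsys
    · have ht1 : 1 < t := by
        rcases Nat.lt_or_ge t 2 with h | h
        · interval_cases t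
          · omega
          · exfalso
            apply hPG
            intro g
            refine ⟨v, ?_⟩
            have hNP : P = N := by simpa using htP
            have hgN : g ^ N = 1 := by rw [hN]; exact pow_card_eq_one'
            rw [← hP, hNP]
            exact hgN
        · omega
      set m : ℕ := ↑(Nat.chineseRemainder hcop 1 0) with hmdef
      have hm1 : m ≡ 1 [MOD P] := (Nat.chineseRemainder hcop 1 0).2.1
      have hm0 : m ≡ 0 [MOD t] := (Nat.chineseRemainder hcop 1 0).2.2
      set m' : ℕ := ↑(Nat.chineseRemainder hcop 0 1) with hm'def
      have hm'0 : m' ≡ 0 [MOD P] := (Nat.chineseRemainder hcop 0 1).2.1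
      have hm'1 : m' ≡ 1 [MOD t] := (Nat.chineseRemainder hcop 0 1).2.2
      set pi1 : G →* G := powMonoidHom m with hpi1
      set pi2 : G →* G := powMonoidHom m' with hpi2
      -- the range of pi1 is a p-group
      have hHp : IsPGroup p pi1.range := by
        rintro ⟨h, g, rfl⟩
        refine ⟨v, ?_⟩
        have hcoe : pi1 g ^ P = 1 := by
          have : (m * P) ≡ 0 [MOD N] := by
            obtain ⟨u, hu⟩ := (Nat.modEq_zero_iff_dvd).mp hm0
            rw [← htP]
            apply Nat.modEq_zero_iff_dvd.mpr
            exact ⟨u, by rw [hu]; ring⟩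
          have := haux g (m * P) 0 this
          simpa [pow_mul, hpi1] using this
        ext
        push_cast
        simpa [pow_mul] using hcoe
      have hrankH : Group.rank pi1.range ≤ n := Group.rank_range_le.trans hn
      obtain ⟨x₁, hx₁⟩ := pHelly hp (Nat.card pi1.range) rfl hHp hrankH
        (fun i => pi1.rangeRestrict (a i)) (fun i => (K i).map pi1.rangeRestrict)
        (by
          intro s hs
          obtain ⟨x, hx⟩ := hsys s hs
          refine ⟨pi1.rangeRestrict x, fun i hi => ?_⟩
          rw [← map_inv, ← map_mul]
          exact Subgroup.mem_map_of_mem _ (hx i hi))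
      -- recursion on the range of pi2
      have hkerne : (MonoidHom.ker pi2) ≠ ⊥ := by
        obtain ⟨g₀, hg₀⟩ := exists_prime_orderOf_dvd_card' (G := G) p (by rwa [← hN])
        have hg₀m : g₀ ^ m' = 1 := by
          apply orderOf_dvd_iff_pow_eq_one.mp
          rw [hg₀]
          exact dvd_trans (dvd_pow_self p hvpos.ne') (Nat.modEq_zero_iff_dvd.mp hm'0)
        intro hbot
        have : g₀ ∈ MonoidHom.ker pi2 := by
          simp only [MonoidHom.mem_ker, hpi2, powMonoidHom_apply]
          exact hg₀m
        rw [hbot, Subgroup.mem_bot] at this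
        rw [this, orderOf_one] at hg₀
        exact hp.one_lt.ne hg₀
      have hcard2 : Nat.card pi2.range < c := by
        have h1 : Nat.card (G ⧸ pi2.ker) = Nat.card pi2.range :=
          Nat.card_congr (QuotientGroup.quotientKerEquivRange pi2).toEquiv
        have h2 : Nat.card G = Nat.card (G ⧸ pi2.ker) * Nat.card pi2.ker :=
          Subgroup.card_eq_card_quotient_mul_card_subgroup pi2.ker
        have h3 : 1 < Nat.card pi2.ker := (pi2.ker).one_lt_card_iff_ne_bot.mpr hkerne
        have h4 : 0 < Nat.card pi2.range := Nat.card_pos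
        rw [h1] at h2
        calc Nat.card pi2.range < Nat.card pi2.range * Nat.card pi2.ker :=
              lt_mul_of_one_lt_right h4 h3
          _ = Nat.card G := h2.symm
          _ = c := hc
      obtain ⟨x₂, hx₂⟩ := IH (Nat.card pi2.range) hcard2 rfl
        (Group.rank_range_le.trans hn)
        (fun i => pi2.rangeRestrict (a i)) (fun i => (K i).map pi2.rangeRestrict)
        (by
          intro s hs
          obtain ⟨x, hx⟩ := hsys s hs
          refine ⟨pi2.rangeRestrict x, fun i hi => ?_⟩
          rw [← map_inv, ← map_mul]
          exact Subgroup.mem_map_of_mem _ (hx i hi))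
      refine ⟨(x₁ : G) * (x₂ : G), fun i => ?_⟩
      obtain ⟨k, hk, hkeq⟩ := hx₁ i
      obtain ⟨k', hk', hk'eq⟩ := hx₂ i
      have hx1coe : (x₁ : G) = a i ^ m * k ^ m := by
        have := congrArg (Subtype.val) hkeq
        push_cast at this
        rw [MonoidHom.coe_rangeRestrict, MonoidHom.coe_rangeRestrict] at this
        simp only [hpi1, powMonoidHom_apply] at this
        rw [this, mul_inv_cancel_left]
      have hx2coe : (x₂ : G) = a i ^ m' * k' ^ m' := by
        have := congrArg (Subtype.val) hk'eq
        push_cast at this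
        rw [MonoidHom.coe_rangeRestrict, MonoidHom.coe_rangeRestrict] at this
        simp only [hpi2, powMonoidHom_apply] at this
        rw [this, mul_inv_cancel_left]
      have hane : a i ^ m * a i ^ m' = a i := by
        rw [← pow_add]
        refine (haux (a i) (m + m') 1 ?_).trans (pow_one _)
        rw [← htP]
        exact (Nat.modEq_and_modEq_iff_modEq_mul hcop).mp ⟨by simpa using hm1.add hm'0, by simpa using hm0.add hm'1⟩
      have hfinal : (a i)⁻¹ * ((x₁ : G) * (x₂ : G)) = k ^ m * k' ^ m' := by
        rw [hx1coe, hx2coe, mul_mul_mul_comm, hane, inv_mul_cancel_left]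
      rw [hfinal]
      exact Subgroup.mul_mem _ (Subgroup.pow_mem _ hk _) (Subgroup.pow_mem _ hk' _)

end Helly

section Part1

variable {G : Type*} [CommGroup G] [Finite G]

/-- The point stabilizer, pulled back along `φ`. -/
def stabSubgroup {Ω : Type*} (φ : G →* Equiv.Perm Ω) (ω : Ω) : Subgroup G where
  carrier := {g | φ g ω = ω}
  one_mem' := by simp
  mul_mem' := by
    intro a b ha hb
    simp only [Set.mem_setOf_eq, map_mul, Equiv.Perm.mul_apply] at *
    rw [hb, ha]
  inv_mem' := by
    intro a ha
    simp only [Set.mem_setOf_eq, map_inv] at *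
    conv_lhs => rw [← ha]
    exact Equiv.symm_apply_apply _ _

theorem totallyKClosed_of_rank (G : Type*) [CommGroup G] [Finite G] :
    IsTotallyKClosed (Group.rank G + 1) G := by
  classical
  intro Ω _ φ _
  set n := Group.rank G with hn
  refine le_antisymm ?_ ?_
  · intro x hx
    have hpoint : ∀ ω : Ω, ∃ g : G, φ g ω = x ω := by
      intro ω
      obtain ⟨gp, hgp, hg⟩ := hx (fun _ => ω)
      obtain ⟨y, rfl⟩ := hgp
      exact ⟨y, (hg ⟨0, Nat.succ_pos n⟩).symm⟩
    choose a ha using hpoint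
    have key : ∀ (g : G) (ω : Ω), (a ω)⁻¹ * g ∈ stabSubgroup φ ω ↔ φ g ω = x ω := by
      intro g ω
      constructor
      · intro h
        have h' : φ ((a ω)⁻¹ * g) ω = ω := h
        rw [map_mul, map_inv, Equiv.Perm.mul_apply] at h'
        have := congrArg (φ (a ω)) h'
        rw [Equiv.Perm.coe_inv, Equiv.apply_symm_apply] at this
        rw [this, ha]
      · intro h
        show φ ((a ω)⁻¹ * g) ω = ω
        rw [map_mul, map_inv, Equiv.Perm.mul_apply, h, ← ha]
        exact Equiv.symm_apply_apply _ _
    obtain ⟨y, hy⟩ := helly_main (Nat.card G) rfl (le_refl n) a (fun ω => stabSubgroup φ ω)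
      (by
        intro s hs
        rcases s.eq_empty_or_nonempty with rfl | ⟨ω₀, hω₀⟩
        · exact ⟨1, by simp⟩
        · set tuple : Fin (n + 1) → Ω := fun i => s.toList.getD (i : ℕ) ω₀ with htuple
          obtain ⟨gp, hgp, hg⟩ := hx tuple
          obtain ⟨y, rfl⟩ := hgp
          refine ⟨y, fun ω hω => ?_⟩
          rw [key]
          have hωl : ω ∈ s.toList := Finset.mem_toList.mpr hω
          obtain ⟨⟨idx, hidx⟩, hget⟩ := List.mem_iff_get.mp hωl
          have hlen : s.toList.length = s.card := Finset.length_toList s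
          have hidx' : idx < n + 1 := by
            rw [hlen] at hidx
            omega
          have : tuple ⟨idx, hidx'⟩ = ω := by
            rw [htuple]
            simp only
            rw [List.getD_eq_getElem _ _ (by simpa using hidx)]
            rw [← hget]
            rfl
          rw [← this]
          exact (hg ⟨idx, hidx'⟩).symm)
    refine ⟨y, ?_⟩
    refine Equiv.ext fun ω => ?_
    exact ((key y ω).mp (hy ω))
  · intro gp hgp
    intro α
    exact ⟨gp, hgp, fun i => rfl⟩

end Part1


section Part2


lemma struct_zmod (G : Type*) [CommGroup G] [Finite G] :
    ∃ (ι : Type) (_ : Fintype ι) (p e : ι → ℕ), (∀ i, (p i).Prime) ∧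
      Nonempty (G ≃* ((i : ι) → Multiplicative (ZMod (p i ^ e i)))) := by
  obtain ⟨ι, inst, pp, hpp, e, ⟨ae⟩⟩ := AddCommGroup.equiv_directSum_zmod_of_finite (Additive G)
  exact ⟨ι, inst, pp, e, hpp, ⟨MulEquiv.toAdditive.symm <| ae.trans <|
    (DirectSum.addEquivProd _).trans <| MulEquiv.toAdditiveRight <| MulEquiv.piMultiplicative _⟩⟩

lemma my_rank_pos {G : Type*} [Group G] [Finite G] (h1 : 1 < Nat.card G) : 0 < Group.rank G := by
  by_contra h0
  push_neg at h0
  obtain ⟨S, hcard, hgen⟩ := Group.rank_spec G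
  have hS : S = ∅ := Finset.card_eq_zero.mp (le_antisymm (hcard.le.trans h0) (Nat.zero_le _))
  rw [hS] at hgen
  simp only [Finset.coe_empty, Subgroup.closure_empty] at hgen
  have : Nat.card G = 1 := by
    have : Subsingleton G := by
      constructor
      intro a b
      have ha : a ∈ (⊥ : Subgroup G) := hgen ▸ Subgroup.mem_top a
      have hb : b ∈ (⊥ : Subgroup G) := hgen ▸ Subgroup.mem_top b
      rw [Subgroup.mem_bot] at ha hb
      rw [ha, hb]
    exact Nat.card_eq_one_iff_unique.mpr ⟨this, inferInstance⟩
  omega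


open Multiplicative in
lemma pi_exists_prime {G : Type*} [CommGroup G] [Finite G] {ι : Type} [Fintype ι]
    (p e : ι → ℕ) (hp : ∀ i, (p i).Prime)
    (f : G ≃* (∀ i, Multiplicative (ZMod (p i ^ e i)))) (hnt : ∃ i, e i ≠ 0) :
    ∃ q : ℕ, q.Prime ∧
      Group.rank G ≤ (Finset.univ.filter (fun i => p i = q ∧ e i ≠ 0)).card := by
  classical
  haveI hNZ : ∀ i, NeZero (p i ^ e i) := fun i => ⟨pow_ne_zero _ (hp i).pos.ne'⟩
  set S : ℕ → Finset ι := fun q => Finset.univ.filter (fun i => p i = q ∧ e i ≠ 0) with hS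
  obtain ⟨i₀, hi₀⟩ := hnt
  set M : Finset ℕ := Finset.image p (Finset.univ.filter fun i => e i ≠ 0) with hM
  have hMne : M.Nonempty := ⟨p i₀, Finset.mem_image.mpr ⟨i₀, Finset.mem_filter.mpr ⟨Finset.mem_univ _, hi₀⟩, rfl⟩⟩
  obtain ⟨q, hqM, hqmax⟩ := M.exists_max_image (fun q => (S q).card) hMne
  have hq : q.Prime := by
    obtain ⟨i, _, rfl⟩ := Finset.mem_image.mp hqM
    exact hp i
  set m := (S q).card with hm
  refine ⟨q, hq, ?_⟩
  set idx : ι → ℕ := fun i => (S (p i)).toList.idxOf i with hidx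
  have hmemS : ∀ i, e i ≠ 0 → i ∈ S (p i) := fun i hi =>
    Finset.mem_filter.mpr ⟨Finset.mem_univ _, rfl, hi⟩
  have hcardS : ∀ i, e i ≠ 0 → (S (p i)).card ≤ m := by
    intro i hi
    exact hqmax (p i) (Finset.mem_image.mpr ⟨i, Finset.mem_filter.mpr ⟨Finset.mem_univ _, hi⟩, rfl⟩)
  have hidx_lt : ∀ i, e i ≠ 0 → idx i < m := by
    intro i hi
    have h1 : idx i < (S (p i)).toList.length :=
      List.idxOf_lt_length_iff.mpr (Finset.mem_toList.mpr (hmemS i hi))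
    rw [Finset.length_toList] at h1
    exact h1.trans_le (hcardS i hi)
  have hidx_inj : ∀ i j, e i ≠ 0 → e j ≠ 0 → p i = p j → idx i = idx j → i = j := by
    intro i j hi hj hpij hij
    have h1 : i ∈ (S (p j)).toList := Finset.mem_toList.mpr (hpij ▸ hmemS i hi)
    have h2 : j ∈ (S (p j)).toList := Finset.mem_toList.mpr (hmemS j hj)
    have : (S (p j)).toList.idxOf i = (S (p j)).toList.idxOf j := by
      rw [hidx] at hij
      simpa [hpij] using hij
    exact (List.idxOf_inj h1).mp this
  set v : Fin m → (∀ i, Multiplicative (ZMod (p i ^ e i))) := fun t i =>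
    if idx i = (t : ℕ) ∧ e i ≠ 0 then ofAdd (1 : ZMod (p i ^ e i)) else 1 with hv
  have hgen : ∀ (j : ι) (y : Multiplicative (ZMod (p j ^ e j))),
      Pi.mulSingle j y ∈ Subgroup.closure (Set.range v) := by
    intro j y
    by_cases hj : e j = 0
    · have hone : p j ^ e j = 1 := by rw [hj, pow_zero]
      haveI : Subsingleton (ZMod (p j ^ e j)) := by rw [hone]; infer_instance
      have hy : y = 1 := by
        have : y.toAdd = (0 : ZMod (p j ^ e j)) := Subsingleton.elim _ _
        rw [← ofAdd_toAdd y, this, ofAdd_zero]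
      rw [hy, Pi.mulSingle_one]
      exact Subgroup.one_mem _
    · set t : Fin m := ⟨idx j, hidx_lt j hj⟩ with ht
      set T : Finset ι := Finset.univ.filter (fun i => (idx i = idx j ∧ e i ≠ 0) ∧ i ≠ j) with hT
      set Mo : ℕ := ∏ i ∈ T, p i ^ e i with hMo
      have hcop : (p j ^ e j).Coprime Mo := by
        apply Nat.Coprime.prod_right
        intro i hi
        obtain ⟨-, ⟨hidxi, hei⟩, hij⟩ := Finset.mem_filter.mp hi
        have hpp : p i ≠ p j := fun hpe => hij (hidx_inj i j hei hj hpe hidxi)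
        exact Nat.Coprime.pow _ _ ((Nat.coprime_primes (hp j) (hp i)).mpr (Ne.symm hpp))
      set c : ℕ := ↑(Nat.chineseRemainder hcop 1 0) with hc
      have hc1 : c ≡ 1 [MOD p j ^ e j] := (Nat.chineseRemainder hcop 1 0).2.1
      have hc0 : c ≡ 0 [MOD Mo] := (Nat.chineseRemainder hcop 1 0).2.2
      have hδ : v t ^ c = Pi.mulSingle j (ofAdd (1 : ZMod (p j ^ e j))) := by
        funext i
        rw [Pi.pow_apply]
        by_cases hij : i = j
        · subst hij
          have hvt : v t i = ofAdd (1 : ZMod (p i ^ e i)) := by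
            simp [hv, ht, hj]
          rw [Pi.mulSingle_eq_same, hvt, ← ofAdd_nsmul]
          congr 1
          rw [nsmul_eq_mul, mul_one]
          have : ((c : ℕ) : ZMod (p i ^ e i)) = ((1 : ℕ) : ZMod (p i ^ e i)) :=
            (ZMod.natCast_eq_natCast_iff _ _ _).mpr hc1
          rw [this, Nat.cast_one]
        · rw [Pi.mulSingle_eq_of_ne hij]
          have hvt : v t i = if idx i = (t : ℕ) ∧ e i ≠ 0 then ofAdd (1 : ZMod (p i ^ e i)) else 1 := rfl
          by_cases hcond : idx i = (t : ℕ) ∧ e i ≠ 0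
          · rw [hvt, if_pos hcond]
            have hiT : i ∈ T := Finset.mem_filter.mpr ⟨Finset.mem_univ _, ⟨hcond.1, hcond.2⟩, hij⟩
            have hdvd : (p i ^ e i) ∣ c :=
              dvd_trans (Finset.dvd_prod_of_mem (fun k => p k ^ e k) hiT) ((Nat.modEq_zero_iff_dvd).mp hc0)
            rw [← ofAdd_nsmul]
            have : ((c : ℕ) • (1 : ZMod (p i ^ e i))) = 0 := by
              rw [nsmul_eq_mul, mul_one]
              exact (ZMod.natCast_eq_zero_iff _ _).mpr hdvd
            rw [this, ofAdd_zero]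
          · rw [hvt, if_neg hcond, one_pow]
      have hδmem : (Pi.mulSingle j (ofAdd (1 : ZMod (p j ^ e j))) :
          ∀ i, Multiplicative (ZMod (p i ^ e i))) ∈ Subgroup.closure (Set.range v) := by
        rw [← hδ]
        exact Subgroup.pow_mem _ (Subgroup.subset_closure (Set.mem_range.mpr ⟨t, rfl⟩)) c
      have hy : (Pi.mulSingle j y : ∀ i, Multiplicative (ZMod (p i ^ e i))) =
          (Pi.mulSingle j (ofAdd (1 : ZMod (p j ^ e j))) :
            ∀ i, Multiplicative (ZMod (p i ^ e i))) ^ (y.toAdd.val) := by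
        funext i
        rw [Pi.pow_apply]
        by_cases hij : i = j
        · subst hij
          rw [Pi.mulSingle_eq_same, Pi.mulSingle_eq_same, ← ofAdd_nsmul]
          congr 1
          rw [nsmul_eq_mul, mul_one, ZMod.natCast_val, ZMod.cast_id]
          exact (ofAdd_toAdd y).symm
        · rw [Pi.mulSingle_eq_of_ne hij, Pi.mulSingle_eq_of_ne hij, one_pow]
      rw [hy]
      exact Subgroup.pow_mem _ hδmem _
  have htop : Subgroup.closure (Set.range v) = ⊤ := by
    rw [eq_top_iff]
    intro x _
    have hx : x = ∏ i, Pi.mulSingle i (x i) := (Finset.univ_prod_mulSingle x).symm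
    rw [hx]
    exact Subgroup.prod_mem _ (fun i _ => hgen i (x i))
  have htopG : Subgroup.closure (Set.range (fun t => f.symm (v t))) = ⊤ := by
    have h1 : Set.range (fun t => f.symm (v t)) = f.symm.toMonoidHom '' (Set.range v) := by
      rw [← Set.range_comp]
      rfl
    rw [h1, ← MonoidHom.map_closure, htop,
      Subgroup.map_top_of_surjective _ f.symm.surjective]
  have h1 : Group.rank G ≤ (Finset.image (fun t => f.symm (v t)) Finset.univ).card := by
    apply Group.rank_le
    rw [Finset.coe_image, Finset.coe_univ, Set.image_univ, htopG]
  refine h1.trans ?_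
  calc (Finset.image (fun t => f.symm (v t)) Finset.univ).card ≤ Finset.univ.card :=
        Finset.card_image_le
    _ = m := by simp

open Multiplicative in
lemma exists_bad_system (G : Type*) [CommGroup G] [Finite G] (h1 : 1 < Nat.card G) :
    ∃ (K : Fin (Group.rank G + 1) → Subgroup G) (b : Fin (Group.rank G + 1) → G),
      (⨅ i, K i) = ⊥ ∧
      (∀ i₀ : Fin (Group.rank G + 1), ∃ g : G, ∀ i, i ≠ i₀ → (b i)⁻¹ * g ∈ K i) ∧
      (¬ ∃ g : G, ∀ i, (b i)⁻¹ * g ∈ K i) := by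
  classical
  set n := Group.rank G with hn
  have hn0 : 0 < n := my_rank_pos h1
  obtain ⟨ι, inst, p, e, hp, ⟨f⟩⟩ := struct_zmod G
  have hnt : ∃ i, e i ≠ 0 := by
    by_contra hall
    push_neg at hall
    have hsub : ∀ i, Subsingleton (Multiplicative (ZMod (p i ^ e i))) := by
      intro i
      rw [hall i, pow_zero]
      infer_instance
    have : Subsingleton G := by
      constructor
      intro a b
      have : f a = f b := by
        funext i
        exact @Subsingleton.elim _ (hsub i) _ _
      have := congrArg f.symm this
      simpa using this
    have : Nat.card G = 1 := Nat.card_eq_one_iff_unique.mpr ⟨this, inferInstance⟩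
    omega
  obtain ⟨q, hq, hcard⟩ := pi_exists_prime p e hp f hnt
  haveI := Fact.mk hq
  rw [← hn] at hcard
  obtain ⟨T, hTsub, hTcard⟩ := Finset.exists_subset_card_eq hcard
  set j : Fin n → ι := fun t => (T.equivFin.symm (Fin.cast hTcard.symm t) : ι) with hj
  have hjT : ∀ t, j t ∈ T := fun t => (T.equivFin.symm (Fin.cast hTcard.symm t)).2
  have hjinj : Function.Injective j := by
    intro s t hst
    have := Subtype.ext hst
    have := T.equivFin.symm.injective this
    simpa [Fin.ext_iff] using this
  have hjS : ∀ t, p (j t) = q ∧ e (j t) ≠ 0 := by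
    intro t
    have := hTsub (hjT t)
    simpa using (Finset.mem_filter.mp this).2
  have hqd : ∀ t, q ∣ p (j t) ^ e (j t) := by
    intro t
    rw [(hjS t).1]
    exact dvd_pow_self q (hjS t).2
  set red : ∀ t : Fin n, ZMod (p (j t) ^ e (j t)) →+* ZMod q :=
    fun t => ZMod.castHom (hqd t) (ZMod q) with hred
  set w : G → ZMod q := fun g => ∑ t, red t (toAdd (f g (j t))) with hw
  have hwmul : ∀ g h : G, w (g * h) = w g + w h := by
    intro g h
    rw [hw]
    simp only [map_mul, Pi.mul_apply, toAdd_mul, map_add]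
    rw [Finset.sum_add_distrib]
  have hwone : w 1 = 0 := by
    rw [hw]
    simp
  have hwinv : ∀ g : G, w g⁻¹ = - w g := by
    intro g
    have := hwmul g g⁻¹
    rw [mul_inv_cancel, hwone] at this
    exact eq_neg_of_add_eq_zero_right this.symm
  -- the special element u(s) with a single 1 in slot j s
  set U : Fin n → G := fun s => f.symm (Pi.mulSingle (j s) (ofAdd (1 : ZMod (p (j s) ^ e (j s))))) with hU
  have hfU : ∀ s i', f (U s) i' = Pi.mulSingle (M := fun i => Multiplicative (ZMod (p i ^ e i))) (j s)
      (ofAdd (1 : ZMod (p (j s) ^ e (j s)))) i' := by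
    intro s i'
    rw [hU]
    simp only [MulEquiv.apply_symm_apply]
  have hwU : ∀ s, w (U s) = 1 := by
    intro s
    rw [hw]
    simp only
    rw [Fintype.sum_eq_single s]
    · rw [hfU s (j s), Pi.mulSingle_eq_same]
      simp
    · intro t hts
      rw [hfU s (j t), Pi.mulSingle_eq_of_ne (fun hc => hts (hjinj hc))]
      simp
  -- subgroups
  set Klast : Subgroup G :=
    { carrier := {g | (∀ i', i' ∉ Set.range j → f g i' = 1) ∧ w g = 0}
      one_mem' := by
        refine ⟨fun i' _ => ?_, hwone⟩
        simp
      mul_mem' := by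
        rintro a b ⟨ha1, ha2⟩ ⟨hb1, hb2⟩
        refine ⟨fun i' hi' => ?_, ?_⟩
        · rw [map_mul, Pi.mul_apply, ha1 i' hi', hb1 i' hi', mul_one]
        · rw [hwmul, ha2, hb2, add_zero]
      inv_mem' := by
        rintro a ⟨ha1, ha2⟩
        refine ⟨fun i' hi' => ?_, ?_⟩
        · rw [map_inv, Pi.inv_apply, ha1 i' hi', inv_one]
        · rw [hwinv, ha2, neg_zero] } with hKlast
  set K : Fin (n + 1) → Subgroup G := fun i =>
    if h : (i : ℕ) < n then
      MonoidHom.ker ((Pi.evalMonoidHom (fun i => Multiplicative (ZMod (p i ^ e i))) (j ⟨i, h⟩)).comp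
        f.toMonoidHom)
    else Klast with hK
  have hKmem : ∀ (i : Fin (n+1)) (h : (i : ℕ) < n) (g : G), g ∈ K i ↔ f g (j ⟨i, h⟩) = 1 := by
    intro i h g
    rw [hK]
    simp only [dif_pos h]
    rfl
  have hKlastmem : ∀ g : G, g ∈ K (Fin.last n) ↔
      ((∀ i', i' ∉ Set.range j → f g i' = 1) ∧ w g = 0) := by
    intro g
    rw [hK]
    simp only [Fin.val_last, lt_irrefl, dif_neg (lt_irrefl n).elim]
    rfl
  set b : Fin (n + 1) → G := fun i => if i = Fin.last n then U ⟨0, hn0⟩ else 1 with hb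
  refine ⟨K, b, ?_, ?_, ?_⟩
  · -- infimum is trivial
    rw [eq_bot_iff]
    intro g hg
    rw [Subgroup.mem_iInf] at hg
    rw [Subgroup.mem_bot]
    have hfg : f g = 1 := by
      funext i'
      by_cases hr : i' ∈ Set.range j
      · obtain ⟨t, rfl⟩ := hr
        have ht' : ((t.castSucc : Fin (n+1)) : ℕ) < n := by
          simpa using t.2
        have := (hKmem t.castSucc ht' g).mp (hg t.castSucc)
        exact this
      · exact ((hKlastmem g).mp (hg (Fin.last n))).1 i' hr
    have := congrArg f.symm hfg
    simpa using this
  · -- any n of the cosets intersect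
    intro i₀
    by_cases hlast : i₀ = Fin.last n
    · refine ⟨1, fun i hi => ?_⟩
      have hiv : (i : ℕ) < n := Fin.val_lt_last (hlast ▸ hi)
      have hbi : b i = 1 := by
        rw [hb]
        simp only [if_neg (hlast ▸ hi)]
      rw [hbi, (hKmem i hiv _)]
      simp
    · have hi₀v : (i₀ : ℕ) < n := Fin.val_lt_last hlast
      set t₀ : Fin n := ⟨i₀, hi₀v⟩ with ht₀
      refine ⟨U t₀, fun i hi => ?_⟩
      by_cases hilast : i = Fin.last n
      · subst hilast
        have hblast : b (Fin.last n) = U ⟨0, hn0⟩ := by rw [hb]; simp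
        rw [hblast, hKlastmem]
        constructor
        · intro i' hi'
          rw [map_mul, map_inv, Pi.mul_apply, Pi.inv_apply, hfU, hfU,
            Pi.mulSingle_eq_of_ne (fun hc => hi' ⟨_, hc.symm⟩) , Pi.mulSingle_eq_of_ne
              (fun hc => hi' ⟨_, hc.symm⟩)]
          simp
        · rw [hwmul, hwinv, hwU, hwU, neg_add_cancel]
      · have hiv : (i : ℕ) < n := Fin.val_lt_last hilast
        have hbi : b i = 1 := by rw [hb]; simp only [if_neg hilast]
        rw [hbi, inv_one, one_mul, hKmem i hiv]
        rw [hfU]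
        refine Pi.mulSingle_eq_of_ne ?_ _
        intro hc
        apply hi
        have := hjinj hc
        rw [ht₀] at this
        ext
        rw [Fin.ext_iff] at this
        simpa using this
  · -- no common element
    rintro ⟨g, hg⟩
    have hcomp : ∀ t : Fin n, f g (j t) = 1 := by
      intro t
      have ht' : ((t.castSucc : Fin (n+1)) : ℕ) < n := by simpa using t.2
      have hbt : b t.castSucc = 1 := by
        rw [hb]
        have : t.castSucc ≠ Fin.last n := by
          intro hc
          have := congrArg Fin.val hc
          simp at this
          omega
        simp only [if_neg this]
      have := hg t.castSucc
      rw [hbt, inv_one, one_mul, hKmem _ ht'] at this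
      exact this
    have hwg : w g = 0 := by
      rw [hw]
      apply Finset.sum_eq_zero
      intro t _
      rw [hcomp t]
      simp
    have := hg (Fin.last n)
    have hblast : b (Fin.last n) = U ⟨0, hn0⟩ := by rw [hb]; simp
    rw [hblast, hKlastmem] at this
    have h2 := this.2
    rw [hwmul, hwinv, hwU, hwg, add_zero] at h2
    have : (1 : ZMod q) = 0 := by linear_combination -h2
    exact one_ne_zero this

end Part2

/-- Conjugation by an equivalence, as a `MulEquiv` of permutation groups. -/
def permMulEquiv {α β : Type*} (q : α ≃ β) : Equiv.Perm α ≃* Equiv.Perm β where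
  toFun s := (q.symm.trans s).trans q
  invFun s := (q.trans s).trans q.symm
  left_inv s := by ext x; simp
  right_inv s := by ext x; simp
  map_mul' s t := by
    ext x
    simp [Equiv.Perm.mul_apply]

/-- A nontrivial finite abelian group is totally `(n(G)+1)`-closed but not totally
`n(G)`-closed, where `n(G)` is the number of invariant factors (minimal number of
generators). -/
theorem abelian_totallyKClosed_rank (G : Type*) [CommGroup G] [Finite G]
    (h1 : 1 < Nat.card G) :
    IsTotallyKClosed (Group.rank G + 1) G ∧ ¬ IsTotallyKClosed (Group.rank G) G := by
  classical
  refine ⟨totallyKClosed_of_rank G, ?_⟩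
  intro hcl
  set n := Group.rank G with hn
  obtain ⟨K, b, hbot, hnwise, hnotall⟩ := exists_bad_system G h1
  set Ω' := (Σ i : Fin (n + 1), G ⧸ K i) with hΩ'
  haveI : Fintype Ω' := Fintype.ofFinite _
  obtain ⟨M, ⟨qe⟩⟩ := Finite.exists_equiv_fin Ω'
  set φ' : G →* Equiv.Perm Ω' := MonoidHom.mk'
    (fun g => Equiv.sigmaCongrRight (fun i => MulAction.toPerm (α := G ⧸ K i) g))
    (by
      intro a c
      apply Equiv.ext
      rintro ⟨i, z⟩
      show (⟨i, (a * c) • z⟩ : Σ i : Fin (n+1), G ⧸ K i) = ⟨i, a • c • z⟩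
      rw [mul_smul]) with hφ'
  have hφ'apply : ∀ (g : G) (i : Fin (n+1)) (z : G ⧸ K i),
      φ' g ⟨i, z⟩ = ⟨i, g • z⟩ := fun g i z => rfl
  have hinj' : Function.Injective φ' := by
    rw [injective_iff_map_eq_one]
    intro g hg
    have hgK : ∀ i : Fin (n + 1), g ∈ K i := by
      intro i
      have h0 : φ' g ⟨i, (1 : G ⧸ K i)⟩ = ⟨i, (1 : G ⧸ K i)⟩ := by rw [hg]; rfl
      rw [hφ'apply] at h0
      have h2 : g • (1 : G ⧸ K i) = 1 := by
        have := (Sigma.mk.inj_iff.mp h0).2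
        exact eq_of_heq this
      have h3 : ((g * 1 : G) : G ⧸ K i) = ((1 : G) : G ⧸ K i) := h2
      rw [mul_one] at h3
      exact (QuotientGroup.eq_one_iff g).mp h3
    have : g ∈ ⨅ i, K i := Subgroup.mem_iInf.mpr hgK
    rwa [hbot, Subgroup.mem_bot] at this
  set x' : Equiv.Perm Ω' := Equiv.sigmaCongrRight (fun i => MulAction.toPerm (α := G ⧸ K i) (b i))
    with hx'
  have hx'apply : ∀ (i : Fin (n+1)) (z : G ⧸ K i), x' ⟨i, z⟩ = ⟨i, b i • z⟩ := fun i z => rfl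
  -- x' is in the n-closure of the range of φ'
  have key1 : ∀ α : Fin n → Ω', ∃ g : G, ∀ t, x' (α t) = φ' g (α t) := by
    intro α
    set J : Finset (Fin (n + 1)) := Finset.image (fun t => (α t).1) Finset.univ with hJ
    have hJcard : J.card ≤ n := Finset.card_image_le.trans (by simp)
    have hJex : ∃ i₀, i₀ ∉ J := by
      by_contra hcon
      push_neg at hcon
      have : (Finset.univ : Finset (Fin (n+1))) ⊆ J := fun i _ => hcon i
      have := Finset.card_le_card this
      simp at this
      omega
    obtain ⟨i₀, hi₀⟩ := hJex
    obtain ⟨g, hgprop⟩ := hnwise i₀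
    refine ⟨g, fun t => ?_⟩
    have hmem : (α t).1 ∈ J := Finset.mem_image.mpr ⟨t, Finset.mem_univ _, rfl⟩
    rcases hat : α t with ⟨i, z⟩
    rw [hat] at hmem
    have hii₀ : i ≠ i₀ := fun hc => hi₀ (hc ▸ hmem)
    have hbK : (b i)⁻¹ * g ∈ K i := hgprop i hii₀
    rw [hx'apply, hφ'apply]
    congr 1
    induction z using Quotient.inductionOn with
    | _ c =>
      show b i • ((c : G ⧸ K i)) = g • ((c : G ⧸ K i))
      have h3 : ((b i * c : G) : G ⧸ K i) = ((g * c : G) : G ⧸ K i) := by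
        rw [QuotientGroup.eq]
        have : (b i * c)⁻¹ * (g * c) = (b i)⁻¹ * g := by
          rw [mul_inv_rev, mul_comm (c⁻¹) ((b i)⁻¹), mul_assoc, mul_comm g c,
            ← mul_assoc c⁻¹ c g, inv_mul_cancel, one_mul]
        rw [this]
        exact hbK
      exact h3
  have key2 : ¬ ∃ g : G, φ' g = x' := by
    rintro ⟨g, hg⟩
    apply hnotall
    refine ⟨g, fun i => ?_⟩
    have h0 : φ' g ⟨i, (1 : G ⧸ K i)⟩ = x' ⟨i, (1 : G ⧸ K i)⟩ := by rw [hg]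
    rw [hφ'apply, hx'apply] at h0
    have h2 : g • (1 : G ⧸ K i) = b i • (1 : G ⧸ K i) := eq_of_heq (Sigma.mk.inj_iff.mp h0).2
    have h3 : ((g * 1 : G) : G ⧸ K i) = ((b i * 1 : G) : G ⧸ K i) := h2
    rw [mul_one, mul_one] at h3
    exact (QuotientGroup.eq).mp h3.symm
  -- transport everything to `Fin M`
  set E := permMulEquiv qe with hE
  set ψ : G →* Equiv.Perm (Fin M) := E.toMonoidHom.comp φ' with hψ
  have hψinj : Function.Injective ψ := by
    intro a c hac
    exact hinj' (E.injective hac)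
  have hEapply : ∀ (s : Equiv.Perm Ω') (y : Fin M), (E s) y = qe (s (qe.symm y)) := fun s y => rfl
  have heq := hcl (Fin M) ψ hψinj
  set x₀ : Equiv.Perm (Fin M) := E x' with hx₀
  have hx₀mem : x₀ ∈ kClosure n ψ.range := by
    intro αf
    obtain ⟨g, hgag⟩ := key1 (fun t => qe.symm (αf t))
    refine ⟨ψ g, ⟨g, rfl⟩, fun t => ?_⟩
    show (E x') (αf t) = (E (φ' g)) (αf t)
    rw [hEapply, hEapply, hgag t]
  have hx₀notin : x₀ ∉ ψ.range := by
    rintro ⟨g, hg⟩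
    exact key2 ⟨g, E.injective hg⟩
  rw [heq] at hx₀mem
  exact hx₀notin hx₀mem
end

section
/- Let G be a finite nilpotent subgroup of Sym(Ω) for a finite set Ω and let k ≥ 2. Then the k-closure G^{(k),Ω} is nilpotent, and the set of prime divisors of |G^{(k),Ω}| equals the set of prime divisors of |G|. -/
open Equiv

namespace KClAux

variable {Ω : Type*}

theorem pair_agree {G : Subgroup (Perm Ω)} {x : Perm Ω} (hx : x ∈ kClosure 2 G) (a b : Ω) :
    ∃ g ∈ G, x a = g a ∧ x b = g b := by
  obtain ⟨g, hg, h⟩ := hx ![a, b]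
  exact ⟨g, hg, by simpa using h 0, by simpa using h 1⟩

theorem le_kClosure (G : Subgroup (Perm Ω)) (k : ℕ) : G ≤ kClosure k G :=
  fun g hg _ => ⟨g, hg, fun _ => rfl⟩

theorem kClosure_le_two {G : Subgroup (Perm Ω)} {k : ℕ} (hk : 2 ≤ k) :
    kClosure k G ≤ kClosure 2 G := by
  intro x hx α
  obtain ⟨g, hg, h⟩ := hx (fun i : Fin k => if i.1 = 0 then α 0 else α 1)
  have h0 := h ⟨0, by omega⟩
  have h1 := h ⟨1, by omega⟩
  simp only [if_pos rfl] at h0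
  norm_num at h1
  refine ⟨g, hg, ?_⟩
  intro i
  fin_cases i
  · exact h0
  · exact h1

theorem kClosure_bot : kClosure 2 (⊥ : Subgroup (Perm Ω)) = ⊥ := by
  refine le_antisymm ?_ (le_kClosure _ _)
  intro x hx
  rw [Subgroup.mem_bot]
  ext a
  obtain ⟨g, hg, h1, -⟩ := pair_agree hx a a
  rw [Subgroup.mem_bot] at hg
  subst hg
  simpa using h1

theorem commute_center {G : Subgroup (Perm Ω)} {x z : Perm Ω} (hx : x ∈ kClosure 2 G)
    (hz : z ∈ G) (hzc : ∀ g ∈ G, z * g = g * z) : Commute x z := by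
  ext a
  obtain ⟨g, hg, h1, h2⟩ := pair_agree hx a (z a)
  have hzg := congrArg (fun q : Perm Ω => q a) (hzc g hg)
  simp only [Perm.mul_apply] at hzg ⊢
  rw [h2, ← hzg, h1]

/-- If all points are fixed by a perm, the perm is fixed by powers too. -/
theorem pow_apply_eq_self {h : Perm Ω} {a : Ω} (ha : h a = a) (e : ℕ) : (h ^ e) a = a := by
  induction e with
  | zero => simp
  | succ e ih => rw [pow_succ, Perm.mul_apply, ha, ih]

end KClAux

namespace KClAux

variable {Ω : Type*}

/-- The setoid whose classes are the orbits of a subgroup `W` of permutations. -/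
def orbSetoid (W : Subgroup (Perm Ω)) : Setoid Ω where
  r a b := ∃ w ∈ W, w a = b
  iseqv := by
    refine ⟨fun a => ⟨1, W.one_mem, rfl⟩, ?_, ?_⟩
    · rintro a b ⟨w, hw, rfl⟩
      exact ⟨w⁻¹, W.inv_mem hw, Equiv.symm_apply_apply w a⟩
    · rintro a b c ⟨w, hw, rfl⟩ ⟨v, hv, rfl⟩
      exact ⟨v * w, W.mul_mem hv hw, rfl⟩

theorem orb_step {G W : Subgroup (Perm Ω)}
    (hWn : ∀ g ∈ G, ∀ w ∈ W, g * w * g⁻¹ ∈ W) {x : Perm Ω} (hx : x ∈ kClosure 2 G) :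
    ∀ a b : Ω, (orbSetoid W).r a b → (orbSetoid W).r (x a) (x b) := by
  rintro a b ⟨w, hw, rfl⟩
  obtain ⟨g, hg, h1, h2⟩ := pair_agree hx a (w a)
  refine ⟨g * w * g⁻¹, hWn g hg w hw, ?_⟩
  rw [h1, h2]
  simp [Perm.mul_apply]

/-- The permutation induced on the orbit space by an element of the 2-closure. -/
def quotHom (G W : Subgroup (Perm Ω))
    (hWn : ∀ g ∈ G, ∀ w ∈ W, g * w * g⁻¹ ∈ W) :
    ↥(kClosure 2 G) →* Perm (Quotient (orbSetoid W)) where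
  toFun x :=
    { toFun := Quotient.map ↑x (orb_step hWn x.2)
      invFun := Quotient.map ↑(x⁻¹) (orb_step hWn (x⁻¹).2)
      left_inv := by
        rintro ⟨a⟩
        exact congrArg (Quotient.mk _) (Equiv.symm_apply_apply (x : Perm Ω) a)
      right_inv := by
        rintro ⟨a⟩
        exact congrArg (Quotient.mk _) (Equiv.apply_symm_apply (x : Perm Ω) a) }
  map_one' := by
    refine Equiv.ext ?_
    rintro ⟨a⟩
    rfl
  map_mul' x y := by
    refine Equiv.ext ?_
    rintro ⟨a⟩
    rfl

theorem quotHom_mk {G W : Subgroup (Perm Ω)}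
    (hWn : ∀ g ∈ G, ∀ w ∈ W, g * w * g⁻¹ ∈ W) (x : ↥(kClosure 2 G)) (a : Ω) :
    quotHom G W hWn x (Quotient.mk _ a) = Quotient.mk _ ((x : Perm Ω) a) := rfl

/-- The image of `G` in the permutations of the orbit space. -/
def quotG (G W : Subgroup (Perm Ω)) (hWn : ∀ g ∈ G, ∀ w ∈ W, g * w * g⁻¹ ∈ W) :
    Subgroup (Perm (Quotient (orbSetoid W))) :=
  ((quotHom G W hWn).comp (Subgroup.inclusion (le_kClosure G 2))).range

theorem quotHom_mem_closure {G W : Subgroup (Perm Ω)}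
    (hWn : ∀ g ∈ G, ∀ w ∈ W, g * w * g⁻¹ ∈ W) (x : ↥(kClosure 2 G)) :
    quotHom G W hWn x ∈ kClosure 2 (quotG G W hWn) := by
  intro α
  obtain ⟨g, hg, h1, h2⟩ := pair_agree x.2 (α 0).out (α 1).out
  refine ⟨quotHom G W hWn (Subgroup.inclusion (le_kClosure G 2) ⟨g, hg⟩), ⟨⟨g, hg⟩, rfl⟩, ?_⟩
  have e0 : quotHom G W hWn x (α 0) =
      quotHom G W hWn (Subgroup.inclusion (le_kClosure G 2) ⟨g, hg⟩) (α 0) := by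
    conv_lhs => rw [← (α 0).out_eq]
    conv_rhs => rw [← (α 0).out_eq]
    rw [quotHom_mk, quotHom_mk]
    exact congrArg _ h1
  have e1 : quotHom G W hWn x (α 1) =
      quotHom G W hWn (Subgroup.inclusion (le_kClosure G 2) ⟨g, hg⟩) (α 1) := by
    conv_lhs => rw [← (α 1).out_eq]
    conv_rhs => rw [← (α 1).out_eq]
    rw [quotHom_mk, quotHom_mk]
    exact congrArg _ h2
  intro i
  fin_cases i
  · exact e0
  · exact e1

theorem card_quot_lt [Finite Ω] {W : Subgroup (Perm Ω)} {w : Perm Ω} (hw : w ∈ W) {a : Ω}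
    (hwa : w a ≠ a) :
    Nat.card (Quotient (orbSetoid W)) < Nat.card Ω := by
  classical
  have : Fintype Ω := Fintype.ofFinite Ω
  have : Fintype (Quotient (orbSetoid W)) := Fintype.ofFinite _
  rw [Nat.card_eq_fintype_card, Nat.card_eq_fintype_card]
  refine Fintype.card_lt_of_surjective_not_injective (Quotient.mk _) (fun q => ⟨q.out, q.out_eq⟩) ?_
  intro hinj
  exact hwa (hinj (Quotient.sound ⟨w⁻¹, W.inv_mem hw, Equiv.symm_apply_apply w a⟩))

end KClAux

namespace KClAux

universe u

/-- Wielandt: the 2-closure of a `p`-subgroup of `Sym(Ω)` consists of `p`-elements. -/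
theorem pgroup_closure : ∀ (n : ℕ) (Ω : Type u) [Finite Ω] (G : Subgroup (Perm Ω)) (p : ℕ),
    Nat.card Ω ≤ n → p.Prime → (∀ g ∈ G, ∃ k : ℕ, g ^ p ^ k = 1) →
    ∀ x ∈ kClosure 2 G, ∃ k : ℕ, x ^ p ^ k = 1 := by
  intro n
  induction n with
  | zero =>
    intro Ω _ G p hΩ hp hG x hx
    have hΩ0 : Nat.card Ω = 0 := Nat.le_zero.mp hΩ
    have hempty : IsEmpty Ω := by
      rcases Nat.card_eq_zero.mp hΩ0 with h | h
      · exact h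
      · exact absurd h (not_infinite_iff_finite.mpr ‹_›)
    exact ⟨0, by ext a; exact hempty.elim a⟩
  | succ n IH =>
    intro Ω _ G p hΩ hp hG x hx
    by_cases hbot : G = ⊥
    · subst hbot
      rw [kClosure_bot, Subgroup.mem_bot] at hx
      exact ⟨0, by rw [hx]; simp⟩
    · -- G is a nontrivial p-group, take a nontrivial central element z'
      haveI := Fact.mk hp
      haveI : Nontrivial ↥G := (Subgroup.nontrivial_iff_ne_bot G).mpr hbot
      have hpg : IsPGroup p ↥G := by
        intro g
        obtain ⟨k, hk⟩ := hG (g : Perm Ω) g.2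
        exact ⟨k, Subtype.ext (by push_cast; exact hk)⟩
      haveI : Nontrivial (Subgroup.center ↥G) := hpg.center_nontrivial
      obtain ⟨z, hzne⟩ := exists_ne (1 : Subgroup.center ↥G)
      set z' : Perm Ω := ((z : ↥G) : Perm Ω) with hz'
      have hz'G : z' ∈ G := (z : ↥G).2
      have hz'c : ∀ g ∈ G, z' * g = g * z' := by
        intro g hg
        have := (Subgroup.mem_center_iff.mp z.2 ⟨g, hg⟩)
        exact congrArg (Subtype.val) this.symm
      have hz'ne : z' ≠ 1 := by
        intro h
        apply hzne
        apply Subtype.ext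
        apply Subtype.ext
        exact h
      obtain ⟨a, ha⟩ : ∃ a : Ω, z' a ≠ a := by
        by_contra hc
        push_neg at hc
        exact hz'ne (Equiv.ext hc)
      -- the subgroup W generated by z'
      set W : Subgroup (Perm Ω) := Subgroup.zpowers z' with hW
      have hWn : ∀ g ∈ G, ∀ w ∈ W, g * w * g⁻¹ ∈ W := by
        intro g hg w hw
        obtain ⟨m, rfl⟩ := Subgroup.mem_zpowers_iff.mp hw
        have hcomm : Commute g (z' ^ m) := (Commute.zpow_right (by
          exact (commute_iff_eq g z').mpr (hz'c g hg).symm) m)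
        rw [hcomm.eq, mul_assoc, mul_inv_cancel, mul_one]
        exact Subgroup.zpow_mem _ (Subgroup.mem_zpowers z') m
      -- exponent of z'
      obtain ⟨kz, hkz⟩ := hG z' hz'G
      -- quotient data
      have hcard : Nat.card (Quotient (orbSetoid W)) < Nat.card Ω :=
        card_quot_lt (Subgroup.mem_zpowers z') ha
      have hQG : ∀ y ∈ quotG G W hWn, ∃ k : ℕ, y ^ p ^ k = 1 := by
        rintro y ⟨⟨g, hg⟩, rfl⟩
        obtain ⟨k, hk⟩ := hG g hg
        refine ⟨k, ?_⟩
        rw [← map_pow]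
        convert map_one ((quotHom G W hWn).comp (Subgroup.inclusion (le_kClosure G 2)))
        apply Subtype.ext
        push_cast
        exact hk
      set X : ↥(kClosure 2 G) := ⟨x, hx⟩ with hX
      obtain ⟨k₁, hk₁⟩ := IH _ (quotG G W hWn) p (by omega) hp hQG
        (quotHom G W hWn X) (quotHom_mem_closure hWn X)
      -- Y := x ^ (p ^ k₁) is in the kernel of quotHom
      set Y : ↥(kClosure 2 G) := X ^ (p ^ k₁) with hY
      have hker : quotHom G W hWn Y = 1 := by rw [hY, map_pow, hk₁]
      -- kernel elements have p-power order
      refine ⟨k₁ + kz, ?_⟩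
      have key : (Y : Perm Ω) ^ p ^ kz = 1 := by
        ext b
        have hb : Quotient.mk (orbSetoid W) ((Y : Perm Ω) b) = Quotient.mk _ b := by
          rw [← quotHom_mk hWn Y b, hker]
          rfl
        obtain ⟨w, hwW, hwb⟩ := (Quotient.exact hb)
        -- w (Y b) = b, so Y b = w⁻¹ b
        have hYb : (Y : Perm Ω) b = w⁻¹ b := by
          conv_rhs => rw [← hwb]
          exact (Equiv.symm_apply_apply w _).symm
        have hcomm : Commute (Y : Perm Ω) w⁻¹ := by
          obtain ⟨m, rfl⟩ := Subgroup.mem_zpowers_iff.mp hwW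
          have h1 : Commute (Y : Perm Ω) z' := commute_center Y.2 hz'G hz'c
          rw [← zpow_neg]
          exact h1.zpow_right (-m)
        have hiter : ∀ j : ℕ, ((Y : Perm Ω) ^ j) b = (w⁻¹ ^ j) b := by
          intro j
          induction j with
          | zero => simp
          | succ j ihj =>
            rw [pow_succ', pow_succ', Perm.mul_apply, Perm.mul_apply, ihj,
              ← Perm.mul_apply, (hcomm.pow_right j).eq, Perm.mul_apply, hYb,
              ← Perm.mul_apply, ← Perm.mul_apply, ← pow_succ, ← pow_succ']
        have hw1 : w⁻¹ ^ p ^ kz = 1 := by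
          obtain ⟨m, rfl⟩ := Subgroup.mem_zpowers_iff.mp hwW
          rw [← zpow_neg, ← zpow_natCast (z' ^ (-m)) (p ^ kz), ← zpow_mul, mul_comm,
            zpow_mul, zpow_natCast, hkz, one_zpow]
        rw [hiter (p ^ kz), hw1]
      have hYcoe : (Y : Perm Ω) = x ^ p ^ k₁ := by rw [hY, hX]; push_cast; rfl
      rw [pow_add, pow_mul, ← hYcoe]
      exact key

end KClAux

namespace KClAux

section GroupTheory

variable {H : Type*} [Group H] [Finite H]

/-- Primary decomposition of an element of a finite group. -/
theorem primary_decomp {q : ℕ} (hq : q.Prime) (g : H) :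
    ∃ u v : H, g = u * v ∧ Commute u v ∧
      (∃ j, orderOf u = q ^ j) ∧ ¬ q ∣ orderOf v ∧ orderOf v ∣ orderOf g ∧
      (q ∣ orderOf g → orderOf v < orderOf g) := by
  set m := orderOf g with hm
  have hm0 : m ≠ 0 := (orderOf_pos g).ne'
  set k := m.factorization q with hk
  set Qk := q ^ k with hQk
  set r := m / Qk with hr
  have hmQr : Qk * r = m := Nat.ordProj_mul_ordCompl_eq_self m q
  have hco : Nat.Coprime Qk r := Nat.Coprime.pow_left k (Nat.coprime_ordCompl hq hm0)
  have hqr : ¬ q ∣ r := Nat.not_dvd_ordCompl hq hm0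
  obtain ⟨e, he1, he2⟩ := Nat.chineseRemainder hco 1 0
  obtain ⟨f, hf1, hf2⟩ := Nat.chineseRemainder hco 0 1
  have hrdvde : r ∣ e := (Nat.modEq_zero_iff_dvd).mp he2
  have hQdvdf : Qk ∣ f := (Nat.modEq_zero_iff_dvd).mp hf1
  have hgfr : (g ^ f) ^ r = 1 := by
    rw [← pow_mul]
    apply orderOf_dvd_iff_pow_eq_one.mp
    calc m = Qk * r := hmQr.symm
      _ ∣ f * r := mul_dvd_mul_right hQdvdf r
  have hgfdvd : orderOf (g ^ f) ∣ r := orderOf_dvd_of_pow_eq_one hgfr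
  refine ⟨g ^ e, g ^ f, ?_, Commute.pow_pow_self g e f, ?_, ?_, ?_, ?_⟩
  · -- g = g^e * g^f
    rw [← pow_add]
    have : e + f ≡ 1 [MOD Qk * r] := by
      rw [← Nat.modEq_and_modEq_iff_modEq_mul hco]
      constructor
      · simpa using (Nat.ModEq.add he1 hf1)
      · simpa using (Nat.ModEq.add he2 hf2)
    rw [hmQr] at this
    rw [(pow_eq_pow_iff_modEq).mpr this, pow_one]
  · -- orderOf (g^e) is a q-power
    have : (g ^ e) ^ Qk = 1 := by
      rw [← pow_mul]
      apply orderOf_dvd_iff_pow_eq_one.mp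
      calc m = Qk * r := hmQr.symm
        _ ∣ Qk * e := mul_dvd_mul_left Qk hrdvde
        _ = e * Qk := mul_comm _ _
    have hdvd : orderOf (g ^ e) ∣ Qk := orderOf_dvd_of_pow_eq_one this
    obtain ⟨j, hjk, hj⟩ := (Nat.dvd_prime_pow hq).mp hdvd
    exact ⟨j, hj⟩
  · -- ¬ q ∣ orderOf (g^f)
    exact fun hc => hqr (hc.trans hgfdvd)
  · -- orderOf (g^f) ∣ m
    exact hgfdvd.trans (Dvd.intro_left Qk hmQr)
  · -- if q ∣ m then orderOf (g^f) < m
    intro hqm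
    have hdvd : orderOf (g ^ f) ∣ r := hgfdvd
    have hk1 : 1 ≤ k := (Nat.Prime.factorization_pos_of_dvd hq hm0 hqm)
    have hQk1 : 1 < Qk := by
      calc 1 < q := hq.one_lt
        _ = q ^ 1 := (pow_one q).symm
        _ ≤ Qk := Nat.pow_le_pow_right hq.pos hk1
    have hrm : r < m := by
      have hr0 : 0 < r := by
        rcases Nat.eq_zero_or_pos r with h | h
        · rw [h, mul_zero] at hmQr; exact absurd hmQr.symm hm0
        · exact h
      calc r = 1 * r := (one_mul r).symm
        _ < Qk * r := (Nat.mul_lt_mul_right hr0).mpr hQk1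
        _ = m := hmQr
    have hord0 : 0 < orderOf (g ^ f) := orderOf_pos _
    rcases Nat.eq_zero_or_pos r with h0 | h0
    · rw [h0, mul_zero] at hmQr; exact absurd hmQr.symm hm0
    · exact lt_of_le_of_lt (Nat.le_of_dvd h0 hdvd) hrm

end GroupTheory

end KClAux

namespace KClAux

open scoped Pointwise in
/-- A finite nilpotent group decomposes as (normal Sylow `p`) * (normal `p`-complement),
with order-characterized membership. -/
theorem nilpotent_decomp {H : Type*} [Group H] [Finite H] (hnil : Group.IsNilpotent H)
    {p : ℕ} (hp : p.Prime) :
    ∃ U V : Subgroup H,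
      (∀ (h u : H), u ∈ U → h * u * h⁻¹ ∈ U) ∧ (∀ (h v : H), v ∈ V → h * v * h⁻¹ ∈ V) ∧
      (∀ u ∈ U, ∃ k, orderOf u = p ^ k) ∧ (∀ v ∈ V, ¬ p ∣ orderOf v) ∧
      (∀ g : H, (∃ k, orderOf g = p ^ k) → g ∈ U) ∧
      (∀ g : H, ¬ p ∣ orderOf g → g ∈ V) ∧
      (∀ g : H, ∃ u ∈ U, ∃ v ∈ V, g = u * v) := by
  classical
  have hnormal : ∀ (q : ℕ) (_ : Fact q.Prime) (P : Sylow q H), (P : Subgroup H).Normal :=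
    (isNilpotent_of_finite_tfae.out 0 3).mp hnil
  -- a "normal Sylow" for each prime, with order-characterized membership
  have hSyl : ∀ q : ℕ, q.Prime → ∃ S : Subgroup H,
      (∀ (h x : H), x ∈ S → h * x * h⁻¹ ∈ S) ∧ (∀ x ∈ S, ∃ j, orderOf x = q ^ j) ∧
      (∀ g : H, (∃ j, orderOf g = q ^ j) → g ∈ S) := by
    intro q hq
    haveI := Fact.mk hq
    let S : Sylow q H := default
    have hSn : (S : Subgroup H).Normal := hnormal q ⟨hq⟩ S
    refine ⟨S, fun h x hx => hSn.conj_mem x hx h, ?_, ?_⟩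
    · intro x hx
      obtain ⟨j, hj⟩ := S.isPGroup' ⟨x, hx⟩
      have hdvd : orderOf (⟨x, hx⟩ : ↥(S : Subgroup H)) ∣ q ^ j := orderOf_dvd_of_pow_eq_one hj
      rw [Subgroup.orderOf_mk] at hdvd
      obtain ⟨i, _, hi⟩ := (Nat.dvd_prime_pow hq).mp hdvd
      exact ⟨i, hi⟩
    · rintro g ⟨j, hj⟩
      have hpg : IsPGroup q (Subgroup.zpowers g) :=
        IsPGroup.of_card (by rw [Nat.card_zpowers, hj])
      obtain ⟨Q, hQ⟩ := hpg.exists_le_sylow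
      haveI : Unique (Sylow q H) := Sylow.unique_of_normal S hSn
      have hQS : Q = S := Subsingleton.elim Q S
      rw [hQS] at hQ
      exact hQ (Subgroup.mem_zpowers g)
  choose Syl hSn hSord hSmem using hSyl
  set U : Subgroup H := Syl p hp with hU
  set F : Finset ℕ := ((Nat.card H).primeFactors).erase p with hF
  set fV : ℕ → Subgroup H := fun q => if hq : q.Prime then Syl q hq else ⊥ with hfV
  have hfVp : ∀ (q : ℕ) (hq : q.Prime), fV q = Syl q hq := by
    intro q hq
    simp only [hfV, dif_pos hq]
  -- induction on finsets of primes: the join is conj-closed, and orders only involve those primes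
  have hsup : ∀ S : Finset ℕ, (∀ q ∈ S, q.Prime) →
      (∀ (h x : H), x ∈ S.sup fV → h * x * h⁻¹ ∈ S.sup fV) ∧
      (∀ x ∈ S.sup fV, (orderOf x).primeFactors ⊆ S) := by
    intro S
    induction S using Finset.induction_on with
    | empty =>
      intro _
      constructor
      · intro h x hx
        rw [Finset.sup_empty, Subgroup.mem_bot] at hx ⊢
        rw [hx]; group
      · intro x hx
        rw [Finset.sup_empty, Subgroup.mem_bot] at hx
        rw [hx]
        simp
    | @insert a S ha ih =>
      intro hprime
      have haP : a.Prime := hprime a (Finset.mem_insert_self a S)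
      have ihS := ih (fun q hq => hprime q (Finset.mem_insert_of_mem hq))
      rw [Finset.sup_insert]
      haveI hBn : (S.sup fV).Normal := ⟨fun x hx h => ihS.1 h x hx⟩
      have hsplit : ∀ x, x ∈ fV a ⊔ S.sup fV →
          ∃ x1 ∈ fV a, ∃ x2 ∈ S.sup fV, x = x1 * x2 := by
        intro x hx
        have hmn : (↑(fV a ⊔ S.sup fV) : Set H) =
            (fV a : Set H) * ((S.sup fV : Subgroup H) : Set H) := Subgroup.mul_normal _ _
        have hx' : x ∈ (fV a : Set H) * ((S.sup fV : Subgroup H) : Set H) := by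
          rw [← hmn]
          exact hx
        obtain ⟨x1, hx1, x2, hx2, hxe⟩ := hx'
        exact ⟨x1, hx1, x2, hx2, hxe.symm⟩
      have hconj : ∀ (h x : H), x ∈ fV a ⊔ S.sup fV → h * x * h⁻¹ ∈ fV a ⊔ S.sup fV := by
        intro h x hx
        obtain ⟨x1, hx1, x2, hx2, rfl⟩ := hsplit x hx
        have he : h * (x1 * x2) * h⁻¹ = (h * x1 * h⁻¹) * (h * x2 * h⁻¹) := by group
        rw [he]
        refine Subgroup.mul_mem _ (Subgroup.mem_sup_left ?_) (Subgroup.mem_sup_right (ihS.1 h x2 hx2))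
        rw [hfVp a haP] at hx1 ⊢
        exact hSn a haP h x1 hx1
      refine ⟨hconj, ?_⟩
      intro x hx
      obtain ⟨x1, hx1, x2, hx2, rfl⟩ := hsplit x hx
      rw [hfVp a haP] at hx1
      obtain ⟨j1, hj1⟩ := hSord a haP x1 hx1
      -- trivial intersection
      have hco : ∀ c : H, c ∈ Syl a haP → c ∈ S.sup fV → c = 1 := by
        intro c hc1 hc2
        obtain ⟨j, hj⟩ := hSord a haP c hc1
        have h2 : (orderOf c).primeFactors ⊆ S := ihS.2 c hc2
        rcases Nat.eq_zero_or_pos j with rfl | hj1'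
        · rw [pow_zero] at hj
          exact orderOf_eq_one_iff.mp hj
        · exfalso
          apply ha
          apply h2
          rw [hj]
          exact Nat.mem_primeFactors.mpr
            ⟨haP, dvd_pow_self a hj1'.ne', pow_ne_zero _ haP.pos.ne'⟩
      have hcomm : Commute x1 x2 := by
        have hc1' : x1⁻¹ * (x2⁻¹ * x1 * x2) ∈ Syl a haP := by
          refine Subgroup.mul_mem _ (Subgroup.inv_mem _ hx1) ?_
          have : x2⁻¹ * x1 * x2 = x2⁻¹ * x1 * (x2⁻¹)⁻¹ := by group
          rw [this]
          exact hSn a haP x2⁻¹ x1 hx1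
        have hc2' : x1⁻¹ * (x2⁻¹ * x1 * x2) ∈ S.sup fV := by
          have he : x1⁻¹ * (x2⁻¹ * x1 * x2) = (x1⁻¹ * x2⁻¹ * (x1⁻¹)⁻¹) * x2 := by group
          rw [he]
          exact Subgroup.mul_mem _ (ihS.1 x1⁻¹ x2⁻¹ (Subgroup.inv_mem _ hx2)) hx2
        have h1 := hco _ hc1' hc2'
        rw [inv_mul_eq_one] at h1
        rw [commute_iff_eq]
        conv_rhs => rw [h1]
        group
      have horder : orderOf (x1 * x2) ∣ orderOf x1 * orderOf x2 :=
        hcomm.orderOf_mul_dvd_mul_orderOf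
      have ho1 : orderOf x1 ≠ 0 := (orderOf_pos x1).ne'
      have ho2 : orderOf x2 ≠ 0 := (orderOf_pos x2).ne'
      intro q hq
      have hq' : q ∈ (orderOf x1 * orderOf x2).primeFactors :=
        Nat.primeFactors_mono horder (Nat.mul_ne_zero ho1 ho2) hq
      rw [Nat.primeFactors_mul ho1 ho2, Finset.mem_union] at hq'
      rcases hq' with hq' | hq'
      · -- q ∣ a-power: q = a
        have hqa : q = a := by
          obtain ⟨hqp, hqd, -⟩ := Nat.mem_primeFactors.mp hq'
          rw [hj1] at hqd
          exact (Nat.prime_dvd_prime_iff_eq hqp haP).mp (hqp.dvd_of_dvd_pow hqd)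
        rw [hqa]
        exact Finset.mem_insert_self a S
      · exact Finset.mem_insert_of_mem (ihS.2 x2 hx2 hq')
  have hFprime : ∀ q ∈ F, q.Prime := by
    intro q hq
    exact Nat.prime_of_mem_primeFactors (Finset.mem_of_mem_erase hq)
  obtain ⟨hVn, hVsub⟩ := hsup F hFprime
  set V : Subgroup H := F.sup fV with hV
  have hVord : ∀ v ∈ V, ¬ p ∣ orderOf v := by
    intro v hv hdvd
    have hp' : p ∈ (orderOf v).primeFactors :=
      Nat.mem_primeFactors.mpr ⟨hp, hdvd, (orderOf_pos v).ne'⟩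
    exact Finset.notMem_erase p _ (hVsub v hv hp')
  have hVmem : ∀ (N : ℕ) (g : H), orderOf g ≤ N → ¬ p ∣ orderOf g → g ∈ V := by
    intro N
    induction N with
    | zero =>
      intro g hg _
      have := orderOf_pos g
      omega
    | succ N ihN =>
      intro g hgN hgp
      by_cases h1 : orderOf g = 1
      · rw [orderOf_eq_one_iff] at h1
        rw [h1]
        exact Subgroup.one_mem V
      · set q := (orderOf g).minFac with hqdef
        have hq : q.Prime := Nat.minFac_prime h1
        have hqdvd : q ∣ orderOf g := Nat.minFac_dvd _
        have hqp : q ≠ p := fun h => hgp (h ▸ hqdvd)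
        obtain ⟨u, v, hguv, hcomm, ⟨j, hju⟩, hqv, hvd, hlt⟩ := primary_decomp hq g
        have hqF : q ∈ F := by
          refine Finset.mem_erase.mpr ⟨hqp, Nat.mem_primeFactors.mpr ⟨hq, ?_, Nat.card_ne_zero.mpr ⟨inferInstance, inferInstance⟩⟩⟩
          exact hqdvd.trans (orderOf_dvd_natCard g)
        have hu : u ∈ V := by
          have hle : fV q ≤ V := Finset.le_sup hqF
          apply hle
          rw [hfVp q hq]
          exact hSmem q hq u ⟨j, hju⟩
        have hv : v ∈ V := by
          apply ihN v ?_ ?_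
          · have := hlt hqdvd
            omega
          · intro hc
            exact hgp (hc.trans hvd)
        rw [hguv]
        exact Subgroup.mul_mem V hu hv
  refine ⟨U, V, ?_, hVn, hSord p hp, hVord, hSmem p hp, fun g hg => hVmem (orderOf g) g le_rfl hg, ?_⟩
  · intro h u hu
    exact hSn p hp h u hu
  · intro g
    obtain ⟨u, v, hguv, hcomm, hpow, hpv, hvd, -⟩ := primary_decomp hp g
    exact ⟨u, hSmem p hp u hpow, v, hVmem (orderOf v) v le_rfl hpv, hguv⟩

end KClAux

namespace KClAux

theorem main_two : ∀ (n : ℕ) (Ω : Type u) [Finite Ω] (G : Subgroup (Perm Ω)),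
    Nat.card Ω ≤ n → Group.IsNilpotent ↥G →
    Group.IsNilpotent ↥(kClosure 2 G) ∧
      (Nat.card ↥(kClosure 2 G)).primeFactors ⊆ (Nat.card ↥G).primeFactors := by
  intro n
  induction n with
  | zero =>
    intro Ω _ G hΩ hnil
    have hempty : IsEmpty Ω := by
      rcases Nat.card_eq_zero.mp (Nat.le_zero.mp hΩ) with h | h
      · exact h
      · exact absurd h (not_infinite_iff_finite.mpr ‹_›)
    have hGeq : kClosure 2 G = G := by
      refine le_antisymm (fun x _ => ?_) (le_kClosure G 2)
      have : x = 1 := Equiv.ext fun a => hempty.elim a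
      rw [this]
      exact G.one_mem
    rw [hGeq]
    exact ⟨hnil, subset_rfl⟩
  | succ n IH =>
    intro Ω _ G hΩ hnil
    classical
    by_cases hbot : G = ⊥
    · subst hbot
      rw [kClosure_bot]
      exact ⟨hnil, subset_rfl⟩
    have hG1 : 1 < Nat.card ↥G := (Subgroup.one_lt_card_iff_ne_bot G).mpr hbot
    obtain ⟨p, hpPs⟩ := Nat.nonempty_primeFactors.mpr hG1
    have hp : p.Prime := Nat.prime_of_mem_primeFactors hpPs
    haveI := Fact.mk hp
    by_cases hmono : ∀ g ∈ G, ∃ k : ℕ, g ^ p ^ k = 1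
    · -- single prime case: the closure is a p-group
      have hcl := pgroup_closure (n + 1) Ω G p hΩ hp hmono
      have hNpow : ∀ X : ↥(kClosure 2 G), ∃ k, X ^ p ^ k = 1 := by
        intro X
        obtain ⟨k, hk⟩ := hcl X.1 X.2
        exact ⟨k, Subtype.ext (by push_cast; exact hk)⟩
      constructor
      · exact IsPGroup.isNilpotent (fun X => hNpow X)
      · intro q hq
        have hqp : q.Prime := Nat.prime_of_mem_primeFactors hq
        haveI := Fact.mk hqp
        obtain ⟨X, hX⟩ := exists_prime_orderOf_dvd_card' q (Nat.dvd_of_mem_primeFactors hq)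
        obtain ⟨k, hk⟩ := hNpow X
        have hdvd : q ∣ p ^ k := by
          rw [← hX]
          exact orderOf_dvd_of_pow_eq_one hk
        have hqep : q = p := (Nat.prime_dvd_prime_iff_eq hqp hp).mp (hqp.dvd_of_dvd_pow hdvd)
        rw [hqep]
        exact hpPs
    · -- multiprime case
      push_neg at hmono
      obtain ⟨g₀, hg₀G, hg₀⟩ := hmono
      obtain ⟨U', V', hU'n, hV'n, hU'ord, hV'ord, hU'mem, hV'mem, hdecomp⟩ :=
        nilpotent_decomp hnil hp
      set U : Subgroup (Perm Ω) := U'.map G.subtype with hUdef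
      set V : Subgroup (Perm Ω) := V'.map G.subtype with hVdef
      have hUn : ∀ g ∈ G, ∀ w ∈ U, g * w * g⁻¹ ∈ U := by
        rintro g hg w ⟨w', hw', rfl⟩
        exact ⟨⟨g, hg⟩ * w' * ⟨g, hg⟩⁻¹, hU'n ⟨g, hg⟩ w' hw', rfl⟩
      have hVn : ∀ g ∈ G, ∀ w ∈ V, g * w * g⁻¹ ∈ V := by
        rintro g hg w ⟨w', hw', rfl⟩
        exact ⟨⟨g, hg⟩ * w' * ⟨g, hg⟩⁻¹, hV'n ⟨g, hg⟩ w' hw', rfl⟩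
      have hordeq : ∀ w' : ↥G, orderOf (G.subtype w') = orderOf w' :=
        fun w' => orderOf_injective G.subtype G.subtype_injective w'
      have hUord : ∀ w ∈ U, ∃ k, orderOf w = p ^ k := by
        rintro w ⟨w', hw', rfl⟩
        rw [hordeq w']
        exact hU'ord w' hw'
      have hVord : ∀ w ∈ V, ¬ p ∣ orderOf w := by
        rintro w ⟨w', hw', rfl⟩
        rw [hordeq w']
        exact hV'ord w' hw'
      -- commuting of U and V elements
      have htriv : ∀ c : ↥G, c ∈ U' → c ∈ V' → c = 1 := by
        intro c hc1 hc2
        obtain ⟨j, hj⟩ := hU'ord c hc1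
        rcases Nat.eq_zero_or_pos j with rfl | hj1
        · rw [pow_zero] at hj
          exact orderOf_eq_one_iff.mp hj
        · exact absurd (hj ▸ dvd_pow_self p hj1.ne') (hV'ord c hc2)
      have hUVcomm' : ∀ x1 x2 : ↥G, x1 ∈ U' → x2 ∈ V' → Commute x1 x2 := by
        intro x1 x2 hx1 hx2
        have hc1' : x1⁻¹ * (x2⁻¹ * x1 * x2) ∈ U' := by
          refine Subgroup.mul_mem _ (Subgroup.inv_mem _ hx1) ?_
          have he : x2⁻¹ * x1 * x2 = x2⁻¹ * x1 * (x2⁻¹)⁻¹ := by group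
          rw [he]
          exact hU'n x2⁻¹ x1 hx1
        have hc2' : x1⁻¹ * (x2⁻¹ * x1 * x2) ∈ V' := by
          have he : x1⁻¹ * (x2⁻¹ * x1 * x2) = (x1⁻¹ * x2⁻¹ * (x1⁻¹)⁻¹) * x2 := by group
          rw [he]
          exact Subgroup.mul_mem _ (hV'n x1⁻¹ x2⁻¹ (Subgroup.inv_mem _ hx2)) hx2
        have h1 := htriv _ hc1' hc2'
        rw [inv_mul_eq_one] at h1
        rw [commute_iff_eq]
        conv_rhs => rw [h1]
        group
      have hUVcomm : ∀ u ∈ U, ∀ v ∈ V, Commute u v := by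
        rintro u ⟨u', hu', rfl⟩ v ⟨v', hv', rfl⟩
        have hcc := hUVcomm' u' v' hu' hv'
        rw [commute_iff_eq] at hcc ⊢
        rw [← map_mul, ← map_mul, hcc]
      -- a nontrivial element of U
      obtain ⟨Xp, hXp⟩ := exists_prime_orderOf_dvd_card' (G := ↥G) p
        (Nat.dvd_of_mem_primeFactors hpPs)
      have hup : (Xp : Perm Ω) ∈ U := ⟨Xp, hU'mem Xp ⟨1, by rw [hXp, pow_one]⟩, rfl⟩
      have hupne : (Xp : Perm Ω) ≠ 1 := by
        intro h
        have h2 : Xp = 1 := Subtype.ext h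
        rw [h2, orderOf_one] at hXp
        exact hp.one_lt.ne' hXp.symm
      obtain ⟨a₁, ha₁⟩ : ∃ a, (Xp : Perm Ω) a ≠ a := by
        by_contra hc
        push_neg at hc
        exact hupne (Equiv.ext hc)
      -- a nontrivial element of V, coming from a prime q ≠ p dividing the order of g₀
      set X₀ : ↥G := ⟨g₀, hg₀G⟩ with hX₀
      obtain ⟨q, hq, hqdvd, hqp⟩ : ∃ q : ℕ, q.Prime ∧ q ∣ orderOf X₀ ∧ q ≠ p := by
        by_contra hc
        push_neg at hc
        have hord0 : orderOf X₀ ≠ 0 := (orderOf_pos X₀).ne'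
        obtain ⟨kk, hk⟩ : ∃ kk, orderOf X₀ = p ^ kk :=
          ⟨_, Nat.eq_prime_pow_of_unique_prime_dvd hord0 (fun {d} hd hdd => hc d hd hdd)⟩
        apply hg₀ kk
        have hXone : X₀ ^ p ^ kk = 1 := by
          rw [← hk]
          exact pow_orderOf_eq_one X₀
        calc g₀ ^ p ^ kk = ((X₀ ^ p ^ kk : ↥G) : Perm Ω) := by push_cast; rfl
          _ = 1 := by rw [hXone]; rfl
      obtain ⟨uq, vq, hg0uv, -, ⟨j, hjq⟩, hqvq, -, -⟩ := primary_decomp hq X₀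
      have huqne : uq ≠ 1 := by
        intro h
        rw [h, one_mul] at hg0uv
        rw [hg0uv] at hqdvd
        exact hqvq hqdvd
      have huqV : uq ∈ V' := by
        apply hV'mem
        rw [hjq]
        intro hc
        exact hqp ((Nat.prime_dvd_prime_iff_eq hp hq).mp (hp.dvd_of_dvd_pow hc)).symm
      have hvqmem : (uq : Perm Ω) ∈ V := ⟨uq, huqV, rfl⟩
      have hvqne : (uq : Perm Ω) ≠ 1 := fun h => huqne (Subtype.ext h)
      obtain ⟨a₂, ha₂⟩ : ∃ a, (uq : Perm Ω) a ≠ a := by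
        by_contra hc
        push_neg at hc
        exact hvqne (Equiv.ext hc)
      -- quotient data
      have hcard₁ : Nat.card (Quotient (orbSetoid U)) < Nat.card Ω := card_quot_lt hup ha₁
      have hcard₂ : Nat.card (Quotient (orbSetoid V)) < Nat.card Ω := card_quot_lt hvqmem ha₂
      set φ₁ := (quotHom G U hUn).comp (Subgroup.inclusion (le_kClosure G 2)) with hφ₁
      set φ₂ := (quotHom G V hVn).comp (Subgroup.inclusion (le_kClosure G 2)) with hφ₂
      haveI := hnil
      have hnil₁ : Group.IsNilpotent ↥(quotG G U hUn) :=
        nilpotent_of_surjective φ₁.rangeRestrict φ₁.rangeRestrict_surjective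
      have hnil₂ : Group.IsNilpotent ↥(quotG G V hVn) :=
        nilpotent_of_surjective φ₂.rangeRestrict φ₂.rangeRestrict_surjective
      have hcd₁ : Nat.card ↥(quotG G U hUn) ∣ Nat.card ↥G :=
        Subgroup.card_dvd_of_surjective φ₁.rangeRestrict φ₁.rangeRestrict_surjective
      have hcd₂ : Nat.card ↥(quotG G V hVn) ∣ Nat.card ↥G :=
        Subgroup.card_dvd_of_surjective φ₂.rangeRestrict φ₂.rangeRestrict_surjective
      obtain ⟨hnilA, hπA⟩ := IH _ (quotG G U hUn) (by omega) hnil₁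
      obtain ⟨hnilB, hπB⟩ := IH _ (quotG G V hVn) (by omega) hnil₂
      set A := kClosure 2 (quotG G U hUn) with hAdef
      set B := kClosure 2 (quotG G V hVn) with hBdef
      have hmem1 : ∀ X : ↥(kClosure 2 G), quotHom G U hUn X ∈ A := quotHom_mem_closure hUn
      have hmem2 : ∀ X : ↥(kClosure 2 G), quotHom G V hVn X ∈ B := quotHom_mem_closure hVn
      set Ψ : ↥(kClosure 2 G) →* ↥A × ↥B :=
        { toFun := fun X => (⟨quotHom G U hUn X, hmem1 X⟩, ⟨quotHom G V hVn X, hmem2 X⟩)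
          map_one' := by
            refine Prod.ext (Subtype.ext ?_) (Subtype.ext ?_) <;> simp
          map_mul' := fun X Y => by
            refine Prod.ext (Subtype.ext ?_) (Subtype.ext ?_) <;> simp } with hΨ
      have hinj : Function.Injective Ψ := by
        rw [injective_iff_map_eq_one]
        intro X hX1
        have h1 : quotHom G U hUn X = 1 := congrArg Subtype.val (congrArg Prod.fst hX1)
        have h2 : quotHom G V hVn X = 1 := congrArg Subtype.val (congrArg Prod.snd hX1)
        apply Subtype.ext
        apply Equiv.ext
        intro a
        show (X : Perm Ω) a = a
        have hq1 : Quotient.mk (orbSetoid U) ((X : Perm Ω) a) = Quotient.mk _ a := by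
          rw [← quotHom_mk hUn X a, h1]
          rfl
        have hq2 : Quotient.mk (orbSetoid V) ((X : Perm Ω) a) = Quotient.mk _ a := by
          rw [← quotHom_mk hVn X a, h2]
          rfl
        obtain ⟨u, huU, hua⟩ := Quotient.exact hq1
        obtain ⟨v, hvV, hva⟩ := Quotient.exact hq2
        have hXa2 : (X : Perm Ω) a = v⁻¹ a := by
          conv_rhs => rw [← hva]
          exact (Equiv.symm_apply_apply v _).symm
        have hha : (u * v⁻¹) a = a := by
          rw [Perm.mul_apply, ← hXa2, hua]
        have hcuv : Commute u v := hUVcomm u huU v hvV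
        have hc : Commute u v⁻¹ := hcuv.inv_right
        obtain ⟨k, hk⟩ := hUord u huU
        have hpv := hVord v hvV
        have hco : Nat.Coprime (orderOf u) (orderOf v⁻¹) := by
          rw [orderOf_inv, hk]
          exact Nat.Coprime.pow_left k (hp.coprime_iff_not_dvd.mpr hpv)
        obtain ⟨e, he1, he2⟩ := Nat.chineseRemainder hco 0 1
        have hue : u ^ e = 1 :=
          orderOf_dvd_iff_pow_eq_one.mp (Nat.modEq_zero_iff_dvd.mp he1)
        have hve : (v⁻¹) ^ e = v⁻¹ := by
          calc (v⁻¹) ^ e = (v⁻¹) ^ 1 := pow_eq_pow_iff_modEq.mpr he2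
            _ = v⁻¹ := pow_one _
        have heqv : v⁻¹ = (u * v⁻¹) ^ e := by
          rw [hc.mul_pow, hue, one_mul, hve]
        rw [hXa2, heqv]
        exact pow_apply_eq_self hha e
      constructor
      · haveI := hnilA
        haveI := hnilB
        haveI : Group.IsNilpotent (↥A × ↥B) := isNilpotent_prod
        exact nilpotent_of_mulEquiv (MonoidHom.ofInjective hinj).symm
      · have hdvd : Nat.card ↥(kClosure 2 G) ∣ Nat.card (↥A × ↥B) :=
          Subgroup.card_dvd_of_injective Ψ hinj
        rw [Nat.card_prod] at hdvd
        intro s hs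
        have hA0 : Nat.card ↥A ≠ 0 := Nat.card_pos.ne'
        have hB0 : Nat.card ↥B ≠ 0 := Nat.card_pos.ne'
        have hs' := Nat.primeFactors_mono hdvd (Nat.mul_ne_zero hA0 hB0) hs
        rw [Nat.primeFactors_mul hA0 hB0, Finset.mem_union] at hs'
        have hGcard0 : Nat.card ↥G ≠ 0 := Nat.card_pos.ne'
        rcases hs' with hs' | hs'
        · exact Nat.primeFactors_mono hcd₁ hGcard0 (hπA hs')
        · exact Nat.primeFactors_mono hcd₂ hGcard0 (hπB hs')

end KClAux


/-- The `k`-closure (`k ≥ 2`) of a finite nilpotent permutation group is nilpotent and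
has the same prime divisors as the group itself. -/
theorem kClosure_nilpotent_same_primes {Ω : Type*} [Finite Ω]
    (G : Subgroup (Equiv.Perm Ω)) (hnil : Group.IsNilpotent ↥G) (k : ℕ) (hk : 2 ≤ k) :
    Group.IsNilpotent ↥(kClosure k G) ∧
      (Nat.card ↥(kClosure k G)).primeFactors = (Nat.card ↥G).primeFactors := by
  obtain ⟨hnil2, hpi2⟩ := KClAux.main_two (Nat.card Ω) Ω G le_rfl hnil
  have hle : kClosure k G ≤ kClosure 2 G := KClAux.kClosure_le_two hk
  have hleG : G ≤ kClosure k G := KClAux.le_kClosure G k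
  constructor
  · haveI := hnil2
    exact nilpotent_of_mulEquiv (Subgroup.subgroupOfEquivOfLe hle)
  · apply Finset.Subset.antisymm
    · intro s hs
      have h1 : Nat.card ↥(kClosure k G) ∣ Nat.card ↥(kClosure 2 G) :=
        Subgroup.card_dvd_of_le hle
      exact hpi2 (Nat.primeFactors_mono h1 Nat.card_pos.ne' hs)
    · intro s hs
      have h1 : Nat.card ↥G ∣ Nat.card ↥(kClosure k G) := Subgroup.card_dvd_of_le hleG
      exact Nat.primeFactors_mono h1 Nat.card_pos.ne' hs
end
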